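/- arXiv:2107.12785 — 11 statements merged into one kernel-verified Lean document; each statement's English description precedes it below -/
import Mathlib

section
/- Consider the COVID-19 model ODE system. Suppose all parameters are positive, the solution (S,E,I_u,I_n,I_h,R,V) is defined and differentiable on [0,∞) with N(t) = S(t)+E(t)+I_u(t)+I_n(t)+I_h(t)+R(t) > 0 for all t ≥ 0, and the initial conditions satisfy S(0) > 0 and E(0), I_u(0), I_n(0), I_h(0), R(0), V(0) ≥ 0. Then for every t ≥ 0 one has S(t) > 0 and E(t), I_u(t), I_n(t), I_h(t), R(t), V(t) ≥ 0; that is, the nonnegative orthant is invariant under the flow and S remains positive for all time. -/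
open Set

private lemma touch_deriv_nonpos {g : ℝ → ℝ} {T d : ℝ} (hT : 0 < T)
    (hg : HasDerivAt g d T) (h0 : g T = 0)
    (hpos : ∀ s, 0 ≤ s → s < T → 0 < g s) : d ≤ 0 := by
  have h := (hg.hasDerivWithinAt (s := Set.Iio T))
  rw [hasDerivWithinAt_iff_tendsto_slope] at h
  have hset : Set.Iio T \ {T} = Set.Iio T := by
    ext x; simp (config := {contextual := true}) [le_of_lt]
  rw [hset] at h
  refine le_of_tendsto h ?_
  filter_upwards [Ioo_mem_nhdsLT_of_mem (Set.mem_Ioc.mpr ⟨hT, le_rfl⟩)] with s hs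
  rw [slope_def_field]
  have h1 : 0 < g s := hpos s hs.1.le hs.2
  have h2 : s - T < 0 := by linarith [hs.2]
  apply div_nonpos_of_nonneg_of_nonpos <;> simp [h0] <;> linarith

private lemma left_lim_nonneg {g : ℝ → ℝ} {T : ℝ} (hT : 0 < T) (hc : ContinuousAt g T)
    (h : ∀ s, 0 ≤ s → s < T → 0 < g s) : 0 ≤ g T := by
  have ht : Filter.Tendsto g (nhdsWithin T (Set.Iio T)) (nhds (g T)) :=
    hc.tendsto.mono_left nhdsWithin_le_nhds
  refine ge_of_tendsto ht ?_
  filter_upwards [Ioo_mem_nhdsLT_of_mem (Set.mem_Ioc.mpr ⟨hT, le_rfl⟩)] with s hs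
  exact (h s hs.1.le hs.2).le

private lemma continuousOn_min' {f g : ℝ → ℝ} {s : Set ℝ} (hf : ContinuousOn f s)
    (hg : ContinuousOn g s) : ContinuousOn (fun x => min (f x) (g x)) s :=
  fun x hx => Filter.Tendsto.min (hf x hx) (hg x hx)

set_option maxHeartbeats 1600000 in
/-- the nonnegative orthant is invariant under the flow of the
COVID-19 model, and the susceptible compartment `S` stays positive. -/
theorem covid_nonneg_orthant_invariant
    (Pi b1 b2 nu th mu ga p eu en su sn sh dn dh au an mc : ℝ)
    (hPi : 0 < Pi) (hb1 : 0 < b1) (hb2 : 0 < b2) (hnu : 0 < nu) (hnu1 : nu < 1)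
    (hth : 0 < th) (hmu : 0 < mu) (hga : 0 < ga) (hp : 0 < p) (hp1 : p < 1)
    (heu : 0 < eu) (hen : 0 < en) (hsu : 0 < su) (hsn : 0 < sn) (hsh : 0 < sh)
    (hdn : 0 < dn) (hdh : 0 < dh) (hau : 0 < au) (han : 0 < an) (hmc : 0 < mc)
    (S E Iu In Ih R V N : ℝ → ℝ)
    (hN : ∀ t, N t = S t + E t + Iu t + In t + Ih t + R t)
    (hNpos : ∀ t ≥ (0 : ℝ), 0 < N t)
    (hS : ∀ t ≥ (0 : ℝ), HasDerivAt S
      (Pi - b1 * S t * (Iu t + nu * In t) / N t - b2 * S t * V t - mu * S t + th * R t) t)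
    (hE : ∀ t ≥ (0 : ℝ), HasDerivAt E
      (b1 * S t * (Iu t + nu * In t) / N t + b2 * S t * V t - (ga + mu) * E t) t)
    (hIu : ∀ t ≥ (0 : ℝ), HasDerivAt Iu ((1 - p) * ga * E t - (eu + su + mu) * Iu t) t)
    (hIn : ∀ t ≥ (0 : ℝ), HasDerivAt In (p * ga * E t - (en + sn + mu + dn) * In t) t)
    (hIh : ∀ t ≥ (0 : ℝ), HasDerivAt Ih (eu * Iu t + en * In t - (sh + mu + dh) * Ih t) t)
    (hR : ∀ t ≥ (0 : ℝ), HasDerivAt R (su * Iu t + sn * In t + sh * Ih t - (th + mu) * R t) t)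
    (hV : ∀ t ≥ (0 : ℝ), HasDerivAt V (au * Iu t + an * In t - mc * V t) t)
    (hS0 : 0 < S 0) (hE0 : 0 ≤ E 0) (hIu0 : 0 ≤ Iu 0) (hIn0 : 0 ≤ In 0)
    (hIh0 : 0 ≤ Ih 0) (hR0 : 0 ≤ R 0) (hV0 : 0 ≤ V 0) :
    ∀ t ≥ (0 : ℝ), 0 < S t ∧ 0 ≤ E t ∧ 0 ≤ Iu t ∧ 0 ≤ In t ∧ 0 ≤ Ih t ∧ 0 ≤ R t ∧ 0 ≤ V t := by
  intro t0 ht0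
  -- continuity of all compartments on [0, t0]
  have hScont : ContinuousOn S (Set.Icc 0 t0) := fun t ht =>
    ((hS t ht.1).continuousAt).continuousWithinAt
  have hEcont : ContinuousOn E (Set.Icc 0 t0) := fun t ht =>
    ((hE t ht.1).continuousAt).continuousWithinAt
  have hIucont : ContinuousOn Iu (Set.Icc 0 t0) := fun t ht =>
    ((hIu t ht.1).continuousAt).continuousWithinAt
  have hIncont : ContinuousOn In (Set.Icc 0 t0) := fun t ht =>
    ((hIn t ht.1).continuousAt).continuousWithinAt
  have hIhcont : ContinuousOn Ih (Set.Icc 0 t0) := fun t ht =>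
    ((hIh t ht.1).continuousAt).continuousWithinAt
  have hRcont : ContinuousOn R (Set.Icc 0 t0) := fun t ht =>
    ((hR t ht.1).continuousAt).continuousWithinAt
  have hVcont : ContinuousOn V (Set.Icc 0 t0) := fun t ht =>
    ((hV t ht.1).continuousAt).continuousWithinAt
  have hNcont : ContinuousOn N (Set.Icc 0 t0) := by
    have h1 : ContinuousOn (fun t => S t + E t + Iu t + In t + Ih t + R t) (Set.Icc 0 t0) :=
      ((((hScont.add hEcont).add hIucont).add hIncont).add hIhcont).add hRcont
    exact h1.congr fun t _ => hN t
  -- a uniform bound B on [0, t0]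
  have hGcont : ContinuousOn (fun t => |S t| + |E t| + |Iu t| + |In t| + |Ih t| + |R t|
      + |V t| + (N t)⁻¹) (Set.Icc 0 t0) := by
    refine ContinuousOn.add ?_ (hNcont.inv₀ fun t ht => (hNpos t ht.1).ne')
    exact (((((hScont.abs.add hEcont.abs).add hIucont.abs).add hIncont.abs).add
      hIhcont.abs).add hRcont.abs).add hVcont.abs
  obtain ⟨B0, hB0⟩ := isCompact_Icc.exists_bound_of_continuousOn hGcont
  set B : ℝ := max B0 1 with hBdef
  have hB1 : (1 : ℝ) ≤ B := le_max_right _ _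
  have hBpos : (0 : ℝ) < B := by linarith
  have hbound : ∀ t ∈ Set.Icc (0:ℝ) t0, |S t| ≤ B ∧ |E t| ≤ B ∧ |Iu t| ≤ B ∧ |In t| ≤ B
      ∧ |Ih t| ≤ B ∧ |R t| ≤ B ∧ |V t| ≤ B ∧ (N t)⁻¹ ≤ B := by
    intro t ht
    have h := hB0 t ht
    rw [Real.norm_eq_abs] at h
    have hGle : |S t| + |E t| + |Iu t| + |In t| + |Ih t| + |R t| + |V t| + (N t)⁻¹ ≤ B := by
      have := le_abs_self (|S t| + |E t| + |Iu t| + |In t| + |Ih t| + |R t| + |V t| + (N t)⁻¹)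
      have hBB : B0 ≤ B := le_max_left _ _
      linarith
    have hinv : 0 ≤ (N t)⁻¹ := inv_nonneg.mpr (hNpos t ht.1).le
    have a1 := abs_nonneg (S t); have a2 := abs_nonneg (E t); have a3 := abs_nonneg (Iu t)
    have a4 := abs_nonneg (In t); have a5 := abs_nonneg (Ih t); have a6 := abs_nonneg (R t)
    have a7 := abs_nonneg (V t)
    refine ⟨by linarith, by linarith, by linarith, by linarith, by linarith,
      by linarith, by linarith, by linarith⟩
  -- constants
  set Cs : ℝ := b1 + b2 + mu + th + ga + eu + en + su + sn + sh + dn + dh + au + an + mc + 1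
    with hCsdef
  set C : ℝ := Cs * (B * B) with hCdef
  have hCspos : 0 < Cs := by rw [hCsdef]; linarith
  have hBB1 : (1 : ℝ) ≤ B * B := by
    have := mul_le_mul hB1 hB1 zero_le_one hBpos.le
    linarith
  have hCs1 : (1 : ℝ) ≤ Cs := by rw [hCsdef]; linarith
  have hC1 : (1 : ℝ) ≤ C := by
    rw [hCdef]
    linarith [mul_nonneg (by linarith : (0:ℝ) ≤ Cs - 1) (by linarith : (0:ℝ) ≤ B * B - 1)]
  have hCpos : (0 : ℝ) < C := by linarith
  -- parameter bounds against C
  have hle : ∀ x : ℝ, 0 < x → x ≤ Cs → x ≤ C ∧ x * B ≤ C ∧ x * (B * B) ≤ C := by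
    intro x hx hxCs
    have h3 : x * (B * B) ≤ Cs * (B * B) := mul_le_mul_of_nonneg_right hxCs (by positivity)
    have h2 : x * B ≤ x * (B * B) := by
      linarith [mul_nonneg (mul_nonneg hx.le hBpos.le) (by linarith : (0:ℝ) ≤ B - 1)]
    have h1 : x ≤ x * B := by linarith [mul_nonneg hx.le (by linarith : (0:ℝ) ≤ B - 1)]
    exact ⟨by rw [hCdef]; linarith, by rw [hCdef]; linarith, by rw [hCdef]; linarith⟩
  have hb1C := hle b1 hb1 (by rw [hCsdef]; linarith)
  have hb2C := hle b2 hb2 (by rw [hCsdef]; linarith)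
  have hmuC := hle mu hmu (by rw [hCsdef]; linarith)
  have hthC := hle th hth (by rw [hCsdef]; linarith)
  have hgaC := hle ga hga (by rw [hCsdef]; linarith)
  have heuC := hle eu heu (by rw [hCsdef]; linarith)
  have henC := hle en hen (by rw [hCsdef]; linarith)
  have hsuC := hle su hsu (by rw [hCsdef]; linarith)
  have hsnC := hle sn hsn (by rw [hCsdef]; linarith)
  have hshC := hle sh hsh (by rw [hCsdef]; linarith)
  have hauC := hle au hau (by rw [hCsdef]; linarith)
  have hanC := hle an han (by rw [hCsdef]; linarith)
  set M : ℝ := 10 * C with hMdef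
  have hMpos : 0 < M := by rw [hMdef]; linarith
  set ε0 : ℝ := (Real.exp (M * t0))⁻¹ with hε0def
  have hε0pos : 0 < ε0 := by rw [hε0def]; positivity
  -- main claim
  have main : ∀ ε : ℝ, 0 < ε → ε ≤ ε0 → ∀ t ∈ Set.Icc (0:ℝ) t0,
      0 ≤ S t + ε * Real.exp (M * t) ∧ 0 ≤ E t + ε * Real.exp (M * t) ∧
      0 ≤ Iu t + ε * Real.exp (M * t) ∧ 0 ≤ In t + ε * Real.exp (M * t) ∧
      0 ≤ Ih t + ε * Real.exp (M * t) ∧ 0 ≤ R t + ε * Real.exp (M * t) ∧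
      0 ≤ V t + ε * Real.exp (M * t) := by
    intro ε hε hεle
    set φ : ℝ → ℝ := fun t => ε * Real.exp (M * t) with hφdef
    have hφcont : Continuous φ := by
      rw [hφdef]
      exact continuous_const.mul (Real.continuous_exp.comp (continuous_const.mul continuous_id))
    have hφder : ∀ x : ℝ, HasDerivAt φ (ε * (Real.exp (M * x) * M)) x := by
      intro x
      rw [hφdef]
      have h1 : HasDerivAt (fun t : ℝ => M * t) M x := by simpa using (hasDerivAt_id x).const_mul M
      exact (h1.exp).const_mul ε
    have hφpos : ∀ x : ℝ, 0 < φ x := fun x => by rw [hφdef]; positivity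
    have hφle1 : ∀ x ∈ Set.Icc (0:ℝ) t0, φ x ≤ 1 := by
      intro x hx
      rw [hφdef]
      have h1 : Real.exp (M * x) ≤ Real.exp (M * t0) :=
        Real.exp_le_exp.mpr (mul_le_mul_of_nonneg_left hx.2 hMpos.le)
      have h2 : ε * Real.exp (M * x) ≤ ε0 * Real.exp (M * t0) :=
        mul_le_mul hεle h1 (Real.exp_pos _).le hε0pos.le
      rw [hε0def, inv_mul_cancel₀ (Real.exp_ne_zero _)] at h2
      exact h2
    set F : ℝ → ℝ := fun t => min (S t + φ t) (min (E t + φ t) (min (Iu t + φ t)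
      (min (In t + φ t) (min (Ih t + φ t) (min (R t + φ t) (V t + φ t)))))) with hFdef
    have hFS : ∀ s, F s ≤ S s + φ s := fun s => min_le_left _ _
    have hFE : ∀ s, F s ≤ E s + φ s := fun s =>
      le_trans (min_le_right _ _) (min_le_left _ _)
    have hFIu : ∀ s, F s ≤ Iu s + φ s := fun s =>
      le_trans (min_le_right _ _) (le_trans (min_le_right _ _) (min_le_left _ _))
    have hFIn : ∀ s, F s ≤ In s + φ s := fun s =>
      le_trans (min_le_right _ _) (le_trans (min_le_right _ _)
        (le_trans (min_le_right _ _) (min_le_left _ _)))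
    have hFIh : ∀ s, F s ≤ Ih s + φ s := fun s =>
      le_trans (min_le_right _ _) (le_trans (min_le_right _ _)
        (le_trans (min_le_right _ _) (le_trans (min_le_right _ _) (min_le_left _ _))))
    have hFR : ∀ s, F s ≤ R s + φ s := fun s =>
      le_trans (min_le_right _ _) (le_trans (min_le_right _ _)
        (le_trans (min_le_right _ _) (le_trans (min_le_right _ _)
          (le_trans (min_le_right _ _) (min_le_left _ _)))))
    have hFV : ∀ s, F s ≤ V s + φ s := fun s =>
      le_trans (min_le_right _ _) (le_trans (min_le_right _ _)
        (le_trans (min_le_right _ _) (le_trans (min_le_right _ _)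
          (le_trans (min_le_right _ _) (min_le_right _ _)))))
    suffices hFpos : ∀ t ∈ Set.Icc (0:ℝ) t0, 0 < F t by
      intro t ht
      have h := hFpos t ht
      have hφt : φ t = ε * Real.exp (M * t) := by rw [hφdef]
      exact ⟨by linarith [(hFS t).trans_lt' h, hφt.le, hφt.ge],
        by linarith [(hFE t).trans_lt' h, hφt.le, hφt.ge],
        by linarith [(hFIu t).trans_lt' h, hφt.le, hφt.ge],
        by linarith [(hFIn t).trans_lt' h, hφt.le, hφt.ge],
        by linarith [(hFIh t).trans_lt' h, hφt.le, hφt.ge],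
        by linarith [(hFR t).trans_lt' h, hφt.le, hφt.ge],
        by linarith [(hFV t).trans_lt' h, hφt.le, hφt.ge]⟩
    by_contra hcon
    push_neg at hcon
    obtain ⟨T1, hT1mem, hT1le⟩ := hcon
    have hBadne : (Set.Icc (0:ℝ) t0 ∩ F ⁻¹' Set.Iic 0).Nonempty := ⟨T1, hT1mem, hT1le⟩
    have hFcont : ContinuousOn F (Set.Icc 0 t0) := by
      rw [hFdef]
      refine continuousOn_min' (hScont.add hφcont.continuousOn) ?_
      refine continuousOn_min' (hEcont.add hφcont.continuousOn) ?_
      refine continuousOn_min' (hIucont.add hφcont.continuousOn) ?_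
      refine continuousOn_min' (hIncont.add hφcont.continuousOn) ?_
      refine continuousOn_min' (hIhcont.add hφcont.continuousOn) ?_
      exact continuousOn_min' (hRcont.add hφcont.continuousOn) (hVcont.add hφcont.continuousOn)
    have hBadclosed : IsClosed (Set.Icc (0:ℝ) t0 ∩ F ⁻¹' Set.Iic 0) :=
      hFcont.preimage_isClosed_of_isClosed isClosed_Icc isClosed_Iic
    have hBadbdd : BddBelow (Set.Icc (0:ℝ) t0 ∩ F ⁻¹' Set.Iic 0) :=
      ⟨0, fun x hx => hx.1.1⟩
    set T : ℝ := sInf (Set.Icc (0:ℝ) t0 ∩ F ⁻¹' Set.Iic 0) with hTdef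
    have hTmem : T ∈ Set.Icc (0:ℝ) t0 ∩ F ⁻¹' Set.Iic 0 :=
      IsClosed.csInf_mem hBadclosed hBadne hBadbdd
    obtain ⟨hTIcc, hTpre⟩ := hTmem
    have hFT : F T ≤ 0 := hTpre
    have hTge : (0:ℝ) ≤ T := hTIcc.1
    have hT0 : 0 < T := by
      rcases eq_or_lt_of_le hTge with h0|h
      · exfalso
        have hφ0 : φ 0 = ε := by rw [hφdef]; simp
        have hF0 : 0 < F 0 := by
          rw [hFdef]
          simp only [lt_min_iff]
          refine ⟨by linarith [hφ0.le, hφ0.ge], by linarith [hφ0.le, hφ0.ge],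
            by linarith [hφ0.le, hφ0.ge], by linarith [hφ0.le, hφ0.ge],
            by linarith [hφ0.le, hφ0.ge], by linarith [hφ0.le, hφ0.ge],
            by linarith [hφ0.le, hφ0.ge]⟩
        rw [← h0] at hFT
        linarith
      · exact h
    have hbefore : ∀ s, 0 ≤ s → s < T → 0 < F s := by
      intro s hs0 hsT
      have hsIcc : s ∈ Set.Icc (0:ℝ) t0 := ⟨hs0, hsT.le.trans hTIcc.2⟩
      by_contra hns
      push_neg at hns
      have h2 : T ≤ s := csInf_le hBadbdd ⟨hsIcc, hns⟩
      linarith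
    -- positivity of each shifted compartment before T, and nonnegativity at T
    have hposS : ∀ s, 0 ≤ s → s < T → 0 < S s + φ s :=
      fun s h1 h2 => lt_of_lt_of_le (hbefore s h1 h2) (hFS s)
    have hposE : ∀ s, 0 ≤ s → s < T → 0 < E s + φ s :=
      fun s h1 h2 => lt_of_lt_of_le (hbefore s h1 h2) (hFE s)
    have hposIu : ∀ s, 0 ≤ s → s < T → 0 < Iu s + φ s :=
      fun s h1 h2 => lt_of_lt_of_le (hbefore s h1 h2) (hFIu s)
    have hposIn : ∀ s, 0 ≤ s → s < T → 0 < In s + φ s :=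
      fun s h1 h2 => lt_of_lt_of_le (hbefore s h1 h2) (hFIn s)
    have hposIh : ∀ s, 0 ≤ s → s < T → 0 < Ih s + φ s :=
      fun s h1 h2 => lt_of_lt_of_le (hbefore s h1 h2) (hFIh s)
    have hposR : ∀ s, 0 ≤ s → s < T → 0 < R s + φ s :=
      fun s h1 h2 => lt_of_lt_of_le (hbefore s h1 h2) (hFR s)
    have hposV : ∀ s, 0 ≤ s → s < T → 0 < V s + φ s :=
      fun s h1 h2 => lt_of_lt_of_le (hbefore s h1 h2) (hFV s)
    have hST : 0 ≤ S T + φ T :=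
      left_lim_nonneg (g := fun t => S t + φ t) hT0 (((hS T hTge).continuousAt).add hφcont.continuousAt) hposS
    have hET : 0 ≤ E T + φ T :=
      left_lim_nonneg (g := fun t => E t + φ t) hT0 (((hE T hTge).continuousAt).add hφcont.continuousAt) hposE
    have hIuT : 0 ≤ Iu T + φ T :=
      left_lim_nonneg (g := fun t => Iu t + φ t) hT0 (((hIu T hTge).continuousAt).add hφcont.continuousAt) hposIu
    have hInT : 0 ≤ In T + φ T :=
      left_lim_nonneg (g := fun t => In t + φ t) hT0 (((hIn T hTge).continuousAt).add hφcont.continuousAt) hposIn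
    have hIhT : 0 ≤ Ih T + φ T :=
      left_lim_nonneg (g := fun t => Ih t + φ t) hT0 (((hIh T hTge).continuousAt).add hφcont.continuousAt) hposIh
    have hRT : 0 ≤ R T + φ T :=
      left_lim_nonneg (g := fun t => R t + φ t) hT0 (((hR T hTge).continuousAt).add hφcont.continuousAt) hposR
    have hVT : 0 ≤ V T + φ T :=
      left_lim_nonneg (g := fun t => V t + φ t) hT0 (((hV T hTge).continuousAt).add hφcont.continuousAt) hposV
    -- numeric facts at T
    obtain ⟨hSB, hEB, hIuB, hInB, hIhB, hRB, hVB, hNB⟩ := hbound T hTIcc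
    rw [abs_le] at hSB hEB hIuB hInB hIhB hRB hVB
    have hNT : 0 < N T := hNpos T hTge
    have hm0 : 0 < (N T)⁻¹ := inv_pos.mpr hNT
    have hpe0 : 0 < φ T := hφpos T
    have hpe1 : φ T ≤ 1 := hφle1 T hTIcc
    have hεM : ε * (Real.exp (M * T) * M) = 10 * (C * φ T) := by rw [hφdef, hMdef]; ring
    have hCφ : 0 < C * φ T := mul_pos hCpos hpe0
    have hk2 : b1 * (N T)⁻¹ ≤ b1 * B := mul_le_mul_of_nonneg_left hNB hb1.le
    have hbm0 : (0:ℝ) ≤ b1 * (N T)⁻¹ := by positivity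
    have hdiv : b1 * S T * (Iu T + nu * In T) / N T
        = b1 * (N T)⁻¹ * (S T * (Iu T + nu * In T)) := by rw [div_eq_mul_inv]; ring
    have h2Bp : Iu T + nu * In T ≤ 2 * B := by
      have k1 := mul_le_mul_of_nonneg_left hInB.2 hnu.le
      have k2 := mul_le_mul_of_nonneg_right hnu1.le hBpos.le
      linarith [hIuB.2]
    have h2Bn : -(2 * B) ≤ Iu T + nu * In T := by
      have k1 := mul_le_mul_of_nonneg_left hInB.1 hnu.le
      have k2 := mul_le_mul_of_nonneg_right hnu1.le hBpos.le
      linarith [hIuB.1, k1, k2]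
    rw [hFdef] at hFT
    simp only [min_le_iff] at hFT
    rcases hFT with h|h|h|h|h|h|h
    · -- S touches 0
      have hzero : S T + φ T = 0 := le_antisymm h hST
      have hd := touch_deriv_nonpos hT0 ((hS T hTge).add (hφder T)) hzero hposS
      rw [hdiv] at hd
      have hSTv : S T = -φ T := by linarith
      have e1 : b1 * (N T)⁻¹ * (S T * (Iu T + nu * In T)) ≤ 2 * (C * φ T) := by
        have hq : S T * (Iu T + nu * In T) = φ T * (-(Iu T + nu * In T)) := by
          rw [hSTv]; ring
        rw [hq]
        have k1 := mul_le_mul_of_nonneg_left (show -(Iu T + nu * In T) ≤ 2 * B by linarith)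
          (show (0:ℝ) ≤ b1 * (N T)⁻¹ * φ T by positivity)
        have k3 := mul_le_mul_of_nonneg_right hk2
          (show (0:ℝ) ≤ φ T * (2 * B) by positivity)
        have k4 := mul_le_mul_of_nonneg_right hb1C.2.2
          (show (0:ℝ) ≤ 2 * φ T by positivity)
        linarith [k1, k3, k4]
      have e2 : b2 * S T * V T ≤ C * φ T := by
        have hq : b2 * S T * V T = b2 * φ T * (-V T) := by rw [hSTv]; ring
        rw [hq]
        have k1 := mul_le_mul_of_nonneg_left (show -V T ≤ B by linarith [hVB.1])
          (show (0:ℝ) ≤ b2 * φ T by positivity)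
        have k2 := mul_le_mul_of_nonneg_right hb2C.2.1 hpe0.le
        linarith [k1, k2]
      have e3 : mu * S T = -(mu * φ T) := by rw [hSTv]; ring
      have e4 := mul_le_mul_of_nonneg_left (show -φ T ≤ R T by linarith) hth.le
      have e5 := mul_le_mul_of_nonneg_right hthC.1 hpe0.le
      have e6 : (0:ℝ) ≤ mu * φ T := by positivity
      linarith [hd, e1, e2, e3, e4, e5, e6, hεM, hCφ]
    · -- E touches 0
      have hzero : E T + φ T = 0 := le_antisymm h hET
      have hd := touch_deriv_nonpos hT0 ((hE T hTge).add (hφder T)) hzero hposE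
      rw [hdiv] at hd
      have hETv : E T = -φ T := by linarith
      have t1 : -(6 * (C * φ T)) ≤ b1 * (N T)⁻¹ * (S T * (Iu T + nu * In T)) := by
        have q1 : 0 ≤ (S T + φ T) * ((Iu T + nu * In T) + (1 + nu) * φ T) := by
          refine mul_nonneg hST ?_
          have hk : 0 ≤ nu * (In T + φ T) := mul_nonneg hnu.le (by linarith)
          linarith [hIuT, hk]
        have QQ := mul_nonneg hbm0 q1
        -- w1 : cross term with φ*(Iu+nu In)
        have w1 : b1 * (N T)⁻¹ * (φ T * (Iu T + nu * In T)) ≤ 2 * (C * φ T) := by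
          have k1 := mul_le_mul_of_nonneg_left h2Bp
            (show (0:ℝ) ≤ b1 * (N T)⁻¹ * φ T by positivity)
          have k3 := mul_le_mul_of_nonneg_right hk2
            (show (0:ℝ) ≤ φ T * (2 * B) by positivity)
          have k4 := mul_le_mul_of_nonneg_right hb1C.2.2
            (show (0:ℝ) ≤ 2 * φ T by positivity)
          linarith [k1, k3, k4]
        have w2 : b1 * (N T)⁻¹ * ((1 + nu) * φ T * S T) ≤ 2 * (C * φ T) := by
          have k1 := mul_le_mul_of_nonneg_left hSB.2
            (show (0:ℝ) ≤ b1 * (N T)⁻¹ * ((1 + nu) * φ T) by positivity)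
          have k2 := mul_le_mul_of_nonneg_right hk2
            (show (0:ℝ) ≤ (1 + nu) * φ T * B by positivity)
          have k3 := mul_le_mul_of_nonneg_right (show (1:ℝ) + nu ≤ 2 by linarith)
            (show (0:ℝ) ≤ b1 * (B * B) * φ T by positivity)
          have k4 := mul_le_mul_of_nonneg_right hb1C.2.2
            (show (0:ℝ) ≤ 2 * φ T by positivity)
          linarith [k1, k2, k3, k4]
        have w3 : b1 * (N T)⁻¹ * ((1 + nu) * φ T * φ T) ≤ 2 * (C * φ T) := by
          have k1 := mul_le_mul_of_nonneg_left hpe1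
            (show (0:ℝ) ≤ b1 * (N T)⁻¹ * ((1 + nu) * φ T) by positivity)
          have k2 := mul_le_mul_of_nonneg_right (show (1:ℝ) + nu ≤ 2 by linarith)
            (show (0:ℝ) ≤ b1 * (N T)⁻¹ * φ T by positivity)
          have k3 := mul_le_mul_of_nonneg_right hk2 hpe0.le
          have k4 := mul_le_mul_of_nonneg_right hb1C.2.1 hpe0.le
          linarith [k1, k2, k3, k4]
        linarith [QQ, w1, w2, w3]
      have t2 : -(3 * (C * φ T)) ≤ b2 * S T * V T := by
        have q2 : 0 ≤ (S T + φ T) * (V T + φ T) := mul_nonneg hST hVT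
        have Q2 := mul_nonneg hb2.le q2
        have w1 : b2 * (φ T * S T) ≤ C * φ T := by
          have k1 := mul_le_mul_of_nonneg_left hSB.2 (show (0:ℝ) ≤ b2 * φ T by positivity)
          have k2 := mul_le_mul_of_nonneg_right hb2C.2.1 hpe0.le
          linarith [k1, k2]
        have w2 : b2 * (φ T * V T) ≤ C * φ T := by
          have k1 := mul_le_mul_of_nonneg_left hVB.2 (show (0:ℝ) ≤ b2 * φ T by positivity)
          have k2 := mul_le_mul_of_nonneg_right hb2C.2.1 hpe0.le
          linarith [k1, k2]
        have w3 : b2 * (φ T * φ T) ≤ C * φ T := by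
          have k1 := mul_le_mul_of_nonneg_left hpe1 (show (0:ℝ) ≤ b2 * φ T by positivity)
          have k2 := mul_le_mul_of_nonneg_right hb2C.1 hpe0.le
          linarith [k1, k2]
        linarith [Q2, w1, w2, w3]
      have e3 : (ga + mu) * E T = -((ga + mu) * φ T) := by rw [hETv]; ring
      have e4 : (0:ℝ) ≤ (ga + mu) * φ T := by positivity
      linarith [hd, t1, t2, e3, e4, hεM, hCφ]
    · -- Iu touches 0
      have hzero : Iu T + φ T = 0 := le_antisymm h hIuT
      have hd := touch_deriv_nonpos hT0 ((hIu T hTge).add (hφder T)) hzero hposIu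
      have hv : Iu T = -φ T := by linarith
      have k1 := mul_le_mul_of_nonneg_left (show -φ T ≤ E T by linarith)
        (mul_nonneg (show (0:ℝ) ≤ 1 - p by linarith) hga.le)
      have hga2 : (1 - p) * ga ≤ C := by
        have := mul_le_mul_of_nonneg_right (show (1:ℝ) - p ≤ 1 by linarith) hga.le
        linarith [hgaC.1]
      have k2 := mul_le_mul_of_nonneg_right hga2 hpe0.le
      have e2 : (eu + su + mu) * Iu T = -((eu + su + mu) * φ T) := by rw [hv]; ring
      have e3 : (0:ℝ) ≤ (eu + su + mu) * φ T := by positivity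
      linarith [hd, k1, k2, e2, e3, hεM, hCφ]
    · -- In touches 0
      have hzero : In T + φ T = 0 := le_antisymm h hInT
      have hd := touch_deriv_nonpos hT0 ((hIn T hTge).add (hφder T)) hzero hposIn
      have hv : In T = -φ T := by linarith
      have k1 := mul_le_mul_of_nonneg_left (show -φ T ≤ E T by linarith)
        (mul_nonneg hp.le hga.le)
      have hga2 : p * ga ≤ C := by
        have := mul_le_mul_of_nonneg_right hp1.le hga.le
        linarith [hgaC.1]
      have k2 := mul_le_mul_of_nonneg_right hga2 hpe0.le
      have e2 : (en + sn + mu + dn) * In T = -((en + sn + mu + dn) * φ T) := by rw [hv]; ring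
      have e3 : (0:ℝ) ≤ (en + sn + mu + dn) * φ T := by positivity
      linarith [hd, k1, k2, e2, e3, hεM, hCφ]
    · -- Ih touches 0
      have hzero : Ih T + φ T = 0 := le_antisymm h hIhT
      have hd := touch_deriv_nonpos hT0 ((hIh T hTge).add (hφder T)) hzero hposIh
      have hv : Ih T = -φ T := by linarith
      have k1 := mul_le_mul_of_nonneg_left (show -φ T ≤ Iu T by linarith) heu.le
      have k2 := mul_le_mul_of_nonneg_right heuC.1 hpe0.le
      have k3 := mul_le_mul_of_nonneg_left (show -φ T ≤ In T by linarith) hen.le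
      have k4 := mul_le_mul_of_nonneg_right henC.1 hpe0.le
      have e2 : (sh + mu + dh) * Ih T = -((sh + mu + dh) * φ T) := by rw [hv]; ring
      have e3 : (0:ℝ) ≤ (sh + mu + dh) * φ T := by positivity
      linarith [hd, k1, k2, k3, k4, e2, e3, hεM, hCφ]
    · -- R touches 0
      have hzero : R T + φ T = 0 := le_antisymm h hRT
      have hd := touch_deriv_nonpos hT0 ((hR T hTge).add (hφder T)) hzero hposR
      have hv : R T = -φ T := by linarith
      have k1 := mul_le_mul_of_nonneg_left (show -φ T ≤ Iu T by linarith) hsu.le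
      have k2 := mul_le_mul_of_nonneg_right hsuC.1 hpe0.le
      have k3 := mul_le_mul_of_nonneg_left (show -φ T ≤ In T by linarith) hsn.le
      have k4 := mul_le_mul_of_nonneg_right hsnC.1 hpe0.le
      have k5 := mul_le_mul_of_nonneg_left (show -φ T ≤ Ih T by linarith) hsh.le
      have k6 := mul_le_mul_of_nonneg_right hshC.1 hpe0.le
      have e2 : (th + mu) * R T = -((th + mu) * φ T) := by rw [hv]; ring
      have e3 : (0:ℝ) ≤ (th + mu) * φ T := by positivity
      linarith [hd, k1, k2, k3, k4, k5, k6, e2, e3, hεM, hCφ]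
    · -- V touches 0
      have hzero : V T + φ T = 0 := le_antisymm h hVT
      have hd := touch_deriv_nonpos hT0 ((hV T hTge).add (hφder T)) hzero hposV
      have hv : V T = -φ T := by linarith
      have k1 := mul_le_mul_of_nonneg_left (show -φ T ≤ Iu T by linarith) hau.le
      have k2 := mul_le_mul_of_nonneg_right hauC.1 hpe0.le
      have k3 := mul_le_mul_of_nonneg_left (show -φ T ≤ In T by linarith) han.le
      have k4 := mul_le_mul_of_nonneg_right hanC.1 hpe0.le
      have e2 : mc * V T = -(mc * φ T) := by rw [hv]; ring
      have e3 : (0:ℝ) ≤ mc * φ T := by positivity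
      linarith [hd, k1, k2, k3, k4, e2, e3, hεM, hCφ]
  -- pass to the limit ε → 0
  have nonneg : ∀ t ∈ Set.Icc (0:ℝ) t0, 0 ≤ S t ∧ 0 ≤ E t ∧ 0 ≤ Iu t ∧ 0 ≤ In t
      ∧ 0 ≤ Ih t ∧ 0 ≤ R t ∧ 0 ≤ V t := by
    intro t ht
    have key : ∀ y : ℝ, (∀ ε : ℝ, 0 < ε → ε ≤ ε0 → 0 ≤ y + ε * Real.exp (M * t)) → 0 ≤ y := by
      intro y hy
      by_contra hneg
      push_neg at hneg
      have hq : 0 < Real.exp (M * t) := Real.exp_pos _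
      set ε : ℝ := min ε0 (-y / (2 * Real.exp (M * t))) with hεdef
      have hεpos : 0 < ε := lt_min hε0pos (div_pos (by linarith) (by positivity))
      have h := hy ε hεpos (min_le_left _ _)
      have h2 : ε ≤ -y / (2 * Real.exp (M * t)) := min_le_right _ _
      have h3 : ε * Real.exp (M * t) ≤ -y / 2 := by
        have := mul_le_mul_of_nonneg_right h2 hq.le
        have heq : -y / (2 * Real.exp (M * t)) * Real.exp (M * t) = -y / 2 := by
          field_simp
        linarith [heq ▸ this]
      linarith
    obtain h := fun ε hε hεle => main ε hε hεle t ht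
    exact ⟨key _ fun ε a b => (h ε a b).1, key _ fun ε a b => (h ε a b).2.1,
      key _ fun ε a b => (h ε a b).2.2.1, key _ fun ε a b => (h ε a b).2.2.2.1,
      key _ fun ε a b => (h ε a b).2.2.2.2.1, key _ fun ε a b => (h ε a b).2.2.2.2.2.1,
      key _ fun ε a b => (h ε a b).2.2.2.2.2.2⟩
  -- strict positivity of S via an exponential barrier
  have hSpos : 0 < S t0 := by
    rcases eq_or_lt_of_le ht0 with h0|ht0pos
    · rw [← h0]; exact hS0
    have hexp : ∀ x : ℝ, HasDerivAt (fun t => Real.exp (M * t)) (Real.exp (M * x) * M) x := by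
      intro x
      have h1 : HasDerivAt (fun t : ℝ => M * t) M x := by simpa using (hasDerivAt_id x).const_mul M
      exact h1.exp
    set u : ℝ → ℝ := fun t => S t * Real.exp (M * t) with hudef
    have hu : ∀ x ∈ Set.Icc (0:ℝ) t0, HasDerivAt u
        ((Pi - b1 * S x * (Iu x + nu * In x) / N x - b2 * S x * V x - mu * S x + th * R x)
          * Real.exp (M * x) + S x * (Real.exp (M * x) * M)) x := by
      intro x hx
      rw [hudef]
      exact (hS x hx.1).mul (hexp x)
    have hucont : ContinuousOn u (Set.Icc 0 t0) := fun x hx =>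
      ((hu x hx).continuousAt).continuousWithinAt
    have humono : MonotoneOn u (Set.Icc 0 t0) := by
      apply monotoneOn_of_deriv_nonneg (convex_Icc 0 t0) hucont
      · intro x hx
        rw [interior_Icc] at hx
        exact ((hu x ⟨hx.1.le, hx.2.le⟩).differentiableAt).differentiableWithinAt
      · intro x hx
        rw [interior_Icc] at hx
        have hxIcc : x ∈ Set.Icc (0:ℝ) t0 := ⟨hx.1.le, hx.2.le⟩
        rw [(hu x hxIcc).deriv]
        obtain ⟨hSx, hEx, hIux, hInx, hIhx, hRx, hVx⟩ := nonneg x hxIcc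
        obtain ⟨hSB, hEB, hIuB, hInB, hIhB, hRB, hVB, hNB⟩ := hbound x hxIcc
        have hNx : 0 < N x := hNpos x hx.1.le
        have hm0 : 0 < (N x)⁻¹ := inv_pos.mpr hNx
        rw [abs_le] at hSB hIuB hInB hVB
        have hdiv : b1 * S x * (Iu x + nu * In x) / N x
            = b1 * (N x)⁻¹ * (Iu x + nu * In x) * S x := by rw [div_eq_mul_inv]; ring
        have hcoef : b1 * (N x)⁻¹ * (Iu x + nu * In x) ≤ 2 * C := by
          have h2B : Iu x + nu * In x ≤ 2 * B := by
            have := mul_le_mul_of_nonneg_right hnu1.le hInx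
            linarith [hIuB.2, hInB.2]
          have hb1m0 : 0 ≤ b1 * (N x)⁻¹ := by positivity
          have hb1m : b1 * (N x)⁻¹ ≤ b1 * B := mul_le_mul_of_nonneg_left hNB hb1.le
          linarith [mul_le_mul_of_nonneg_left h2B hb1m0,
            mul_le_mul_of_nonneg_right hb1m (by linarith : (0:ℝ) ≤ 2 * B), hb1C.2.2]
        have hb2V : b2 * V x ≤ C := by
          linarith [mul_le_mul_of_nonneg_left hVB.2 hb2.le, hb2C.2.1]
        have hex : 0 < Real.exp (M * x) := Real.exp_pos _
        have hSM : S x * M = 10 * (C * S x) := by rw [hMdef]; ring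
        have inner : 0 ≤ Pi - b1 * (N x)⁻¹ * (Iu x + nu * In x) * S x - b2 * S x * V x
            - mu * S x + th * R x + S x * M := by
          linarith [mul_le_mul_of_nonneg_right hcoef hSx,
            mul_le_mul_of_nonneg_right hb2V hSx,
            mul_le_mul_of_nonneg_right hmuC.1 hSx,
            mul_nonneg hth.le hRx, hSM, mul_nonneg hCpos.le hSx]
        rw [hdiv]
        linarith [mul_nonneg inner hex.le]
    have h01 : u 0 ≤ u t0 := humono ⟨le_rfl, ht0⟩ ⟨ht0, le_rfl⟩ ht0
    have hu0 : u 0 = S 0 := by rw [hudef]; simp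
    have hut0 : u t0 = S t0 * Real.exp (M * t0) := by rw [hudef]
    by_contra hcon
    push_neg at hcon
    have hne := mul_le_mul_of_nonneg_right hcon (Real.exp_pos (M * t0)).le
    rw [zero_mul] at hne
    linarith [h01, hu0.symm.trans_le (h01.trans_eq hut0), hS0, hne]
  have h7 := nonneg t0 ⟨ht0, le_rfl⟩
  exact ⟨hSpos, h7.2.1, h7.2.2.1, h7.2.2.2.1, h7.2.2.2.2.1, h7.2.2.2.2.2.1, h7.2.2.2.2.2.2⟩
end

section
/- Consider the COVID-19 model ODE system with all parameters positive. Suppose (S,E,I_u,I_n,I_h,R,V) is a solution defined and differentiable on [0,∞) whose components are all nonnegative for every t ≥ 0 and with N(t) = S(t)+E(t)+I_u(t)+I_n(t)+I_h(t)+R(t) > 0 for all t ≥ 0. Then the total population N satisfies limsup_{t→∞} N(t) ≤ Π/μ. -/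
/-- for nonnegative solutions of the COVID-19 model, the total
population `N` satisfies `limsup_{t→∞} N(t) ≤ Π/μ`. -/
theorem covid_total_population_limsup
    (Pi b1 b2 nu th mu ga p eu en su sn sh dn dh au an mc : ℝ)
    (hPi : 0 < Pi) (hb1 : 0 < b1) (hb2 : 0 < b2) (hnu : 0 < nu) (hnu1 : nu < 1)
    (hth : 0 < th) (hmu : 0 < mu) (hga : 0 < ga) (hp : 0 < p) (hp1 : p < 1)
    (heu : 0 < eu) (hen : 0 < en) (hsu : 0 < su) (hsn : 0 < sn) (hsh : 0 < sh)
    (hdn : 0 < dn) (hdh : 0 < dh) (hau : 0 < au) (han : 0 < an) (hmc : 0 < mc)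
    (S E Iu In Ih R V N : ℝ → ℝ)
    (hN : ∀ t, N t = S t + E t + Iu t + In t + Ih t + R t)
    (hNpos : ∀ t ≥ (0 : ℝ), 0 < N t)
    (hnonneg : ∀ t ≥ (0 : ℝ), 0 ≤ S t ∧ 0 ≤ E t ∧ 0 ≤ Iu t ∧ 0 ≤ In t ∧ 0 ≤ Ih t ∧
      0 ≤ R t ∧ 0 ≤ V t)
    (hS : ∀ t ≥ (0 : ℝ), HasDerivAt S
      (Pi - b1 * S t * (Iu t + nu * In t) / N t - b2 * S t * V t - mu * S t + th * R t) t)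
    (hE : ∀ t ≥ (0 : ℝ), HasDerivAt E
      (b1 * S t * (Iu t + nu * In t) / N t + b2 * S t * V t - (ga + mu) * E t) t)
    (hIu : ∀ t ≥ (0 : ℝ), HasDerivAt Iu ((1 - p) * ga * E t - (eu + su + mu) * Iu t) t)
    (hIn : ∀ t ≥ (0 : ℝ), HasDerivAt In (p * ga * E t - (en + sn + mu + dn) * In t) t)
    (hIh : ∀ t ≥ (0 : ℝ), HasDerivAt Ih (eu * Iu t + en * In t - (sh + mu + dh) * Ih t) t)
    (hR : ∀ t ≥ (0 : ℝ), HasDerivAt R (su * Iu t + sn * In t + sh * Ih t - (th + mu) * R t) t)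
    (hV : ∀ t ≥ (0 : ℝ), HasDerivAt V (au * Iu t + an * In t - mc * V t) t) :
    Filter.limsup N Filter.atTop ≤ Pi / mu := by
  set c : ℝ := Pi / mu with hc
  -- derivative of N
  have hN' : ∀ t ≥ (0 : ℝ), HasDerivAt N (Pi - mu * N t - dn * In t - dh * Ih t) t := by
    intro t ht
    have h := (((((hS t ht).add (hE t ht)).add (hIu t ht)).add (hIn t ht)).add
      (hIh t ht)).add (hR t ht)
    have hfun : N = fun t => S t + E t + Iu t + In t + Ih t + R t := funext hN
    rw [hfun]
    refine h.congr_deriv ?_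
    rw [hN t]
    ring
  -- auxiliary function g
  set g : ℝ → ℝ := fun t => (N t - c) * Real.exp (mu * t) with hg
  have hg' : ∀ t ≥ (0 : ℝ), HasDerivAt g
      ((Pi - mu * N t - dn * In t - dh * Ih t) * Real.exp (mu * t)
        + (N t - c) * (Real.exp (mu * t) * mu)) t := by
    intro t ht
    have h1 : HasDerivAt (fun t => Real.exp (mu * t)) (Real.exp (mu * t) * mu) t := by
      simpa using ((hasDerivAt_id t).const_mul mu).exp
    exact ((hN' t ht).sub_const c).mul h1
  have hmono : AntitoneOn g (Set.Ici (0 : ℝ)) := by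
    apply antitoneOn_of_deriv_nonpos (convex_Ici 0)
    · intro x hx
      exact ((hg' x hx).continuousAt).continuousWithinAt
    · intro x hx
      rw [interior_Ici] at hx
      exact ((hg' x (le_of_lt hx)).differentiableAt.differentiableWithinAt)
    · intro x hx
      rw [interior_Ici] at hx
      have hx' : (0 : ℝ) ≤ x := le_of_lt hx
      rw [(hg' x hx').deriv]
      have hexp : 0 < Real.exp (mu * x) := Real.exp_pos _
      have hIn0 := (hnonneg x hx').2.2.2.1
      have hIh0 := (hnonneg x hx').2.2.2.2.1
      have hkey : (Pi - mu * N x - dn * In x - dh * Ih x) * Real.exp (mu * x)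
          + (N x - c) * (Real.exp (mu * x) * mu)
          = -((dn * In x + dh * Ih x) * Real.exp (mu * x)) := by
        have : c * mu = Pi := by rw [hc]; field_simp [hmu.ne']
        nlinarith [this]
      rw [hkey]
      have : 0 ≤ (dn * In x + dh * Ih x) * Real.exp (mu * x) := by positivity
      linarith
  -- bound: N t ≤ c + (N 0 - c) * exp (-(mu * t)) for t ≥ 0
  have hbound : ∀ t ≥ (0 : ℝ), N t ≤ c + (N 0 - c) * Real.exp (-(mu * t)) := by
    intro t ht
    have h := hmono (Set.self_mem_Ici) (Set.mem_Ici.mpr ht) ht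
    have h0 : g 0 = N 0 - c := by simp [hg]
    rw [h0] at h
    have hexp : 0 < Real.exp (mu * t) := Real.exp_pos _
    have : (N t - c) ≤ (N 0 - c) * Real.exp (-(mu * t)) := by
      rw [Real.exp_neg]
      have h2 := mul_le_mul_of_nonneg_right h (inv_nonneg.mpr hexp.le)
      simp only [hg] at h2
      rw [mul_assoc, mul_inv_cancel₀ hexp.ne', mul_one] at h2
      exact h2
    linarith
  -- the bound tends to c
  have htend : Filter.Tendsto (fun t => c + (N 0 - c) * Real.exp (-(mu * t)))
      Filter.atTop (nhds c) := by
    have h1 : Filter.Tendsto (fun t : ℝ => -(mu * t)) Filter.atTop Filter.atBot := by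
      have := Filter.Tendsto.const_mul_atTop hmu (Filter.tendsto_id (α := ℝ))
      exact Filter.tendsto_neg_atBot_iff.mpr this
    have h2 : Filter.Tendsto (fun t : ℝ => Real.exp (-(mu * t))) Filter.atTop (nhds 0) :=
      Real.tendsto_exp_atBot.comp h1
    have h3 := (h2.const_mul (N 0 - c)).const_add c
    simpa using h3
  refine le_trans (Filter.limsup_le_limsup
    (Filter.eventually_atTop.mpr ⟨0, fun t ht => hbound t ht⟩) ?_ ?_) ?_
  · exact Filter.isCoboundedUnder_le_of_eventually_le Filter.atTop
      (x := 0) (Filter.eventually_atTop.mpr ⟨0, fun t ht => (hNpos t ht).le⟩)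
  · exact htend.isBoundedUnder_le
  · exact le_of_eq (htend.limsup_eq)
end

section
/- Let all model parameters be positive and set φ_u = η_u+σ_u+μ, φ_n = η_n+σ_n+μ+δ_n, φ_h = σ_h+μ+δ_h. Let F and W be the 5×5 real matrices (ordering the coordinates as E, I_u, I_n, I_h, V): F has first row (0, β1, β1·ν, 0, β2·Π/μ) and all other entries zero; W has rows (γ+μ, 0, 0, 0, 0), (−(1−p)·γ, φ_u, 0, 0, 0), (−p·γ, 0, φ_n, 0, 0), (0, −η_u, −η_n, φ_h, 0), (0, −α_u, −α_n, 0, μ_c). Then W is invertible and the spectral radius of the next-generation matrix F·W⁻¹ equals ℛ₀ = (1−p)·γ·β1/(φ_u·(γ+μ)) + p·γ·ν·β1/(φ_n·(γ+μ)) + (1−p)·γ·α_u·β2·(Π/μ)/(μ_c·φ_u·(γ+μ)) + p·γ·α_n·β2·(Π/μ)/(μ_c·φ_n·(γ+μ)). -/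
set_option maxHeartbeats 1000000 in
/-- the transition matrix `W` is invertible and the spectral
radius of the next-generation matrix `F * W⁻¹` equals the basic reproduction
number `ℛ₀` of the COVID-19 model. -/
theorem covid_next_generation_spectral_radius
    (Pi b1 b2 nu th mu ga p eu en su sn sh dn dh au an mc : ℝ)
    (hPi : 0 < Pi) (hb1 : 0 < b1) (hb2 : 0 < b2) (hnu : 0 < nu) (hnu1 : nu < 1)
    (hth : 0 < th) (hmu : 0 < mu) (hga : 0 < ga) (hp : 0 < p) (hp1 : p < 1)
    (heu : 0 < eu) (hen : 0 < en) (hsu : 0 < su) (hsn : 0 < sn) (hsh : 0 < sh)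
    (hdn : 0 < dn) (hdh : 0 < dh) (hau : 0 < au) (han : 0 < an) (hmc : 0 < mc)
    (phiu phin phih : ℝ)
    (hphiu : phiu = eu + su + mu) (hphin : phin = en + sn + mu + dn)
    (hphih : phih = sh + mu + dh)
    (F W : Matrix (Fin 5) (Fin 5) ℝ)
    (hF : F = !![0, b1, b1 * nu, 0, b2 * Pi / mu;
                 0, 0, 0, 0, 0;
                 0, 0, 0, 0, 0;
                 0, 0, 0, 0, 0;
                 0, 0, 0, 0, 0])
    (hW : W = !![ga + mu, 0, 0, 0, 0;
                 -(1 - p) * ga, phiu, 0, 0, 0;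
                 -p * ga, 0, phin, 0, 0;
                 0, -eu, -en, phih, 0;
                 0, -au, -an, 0, mc])
    (R0 : ℝ)
    (hR0 : R0 = (1 - p) * ga * b1 / (phiu * (ga + mu))
      + p * ga * nu * b1 / (phin * (ga + mu))
      + (1 - p) * ga * au * b2 * (Pi / mu) / (mc * phiu * (ga + mu))
      + p * ga * an * b2 * (Pi / mu) / (mc * phin * (ga + mu))) :
    IsUnit W.det ∧
      spectralRadius ℂ ((F * W⁻¹).map Complex.ofReal) = ENNReal.ofReal R0 := by
  have hphiu0 : 0 < phiu := by rw [hphiu]; positivity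
  have hphin0 : 0 < phin := by rw [hphin]; positivity
  have hphih0 : 0 < phih := by rw [hphih]; positivity
  have hgm : (0:ℝ) < ga + mu := by positivity
  have h1p : (0:ℝ) < 1 - p := by linarith
  -- determinant of W
  have hdetW : W.det = (ga + mu) * phiu * phin * phih * mc := by
    rw [hW]
    simp [Matrix.det_succ_row_zero, Fin.sum_univ_succ, Matrix.vecHead, Matrix.vecTail]
    ring
  have hWunit : IsUnit W.det := by
    rw [hdetW]; exact isUnit_iff_ne_zero.mpr (by positivity)
  refine ⟨hWunit, ?_⟩
  set m4 : ℝ := b2 * Pi / (mu * mc) with hm4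
  set m1 : ℝ := (b1 + au * m4) / phiu with hm1
  set m2 : ℝ := (b1 * nu + an * m4) / phin with hm2
  have hm40 : 0 < m4 := by rw [hm4]; positivity
  have hm10 : 0 < m1 := by rw [hm1]; positivity
  have hm20 : 0 < m2 := by rw [hm2]; positivity
  have hR0pos : 0 < R0 := by
    rw [hR0]
    have t1 : 0 < (1 - p) * ga * b1 / (phiu * (ga + mu)) :=
      div_pos (mul_pos (mul_pos h1p hga) hb1) (by positivity)
    have t2 : 0 < p * ga * nu * b1 / (phin * (ga + mu)) := by positivity
    have t3 : 0 < (1 - p) * ga * au * b2 * (Pi / mu) / (mc * phiu * (ga + mu)) :=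
      div_pos (by positivity) (by positivity)
    have t4 : 0 < p * ga * an * b2 * (Pi / mu) / (mc * phin * (ga + mu)) := by positivity
    linarith
  set M : Matrix (Fin 5) (Fin 5) ℝ :=
    !![R0, m1, m2, 0, m4; 0,0,0,0,0; 0,0,0,0,0; 0,0,0,0,0; 0,0,0,0,0] with hM
  -- scalar identities
  have e0 : R0 * (ga + mu) + m1 * (-(1 - p) * ga) + m2 * (-p * ga) = 0 := by
    rw [hR0, hm1, hm2, hm4]; field_simp; ring
  have e1 : m1 * phiu + m4 * (-au) = b1 := by
    rw [hm1]; field_simp; ring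
  have e2 : m2 * phin + m4 * (-an) = b1 * nu := by
    rw [hm2]; field_simp; ring
  have e4 : m4 * mc = b2 * Pi / mu := by
    rw [hm4]; field_simp
  have hMW : M * W = F := by
    have key : M * W =
        !![R0 * (ga + mu) + m1 * (-(1 - p) * ga) + m2 * (-p * ga),
           m1 * phiu + m4 * (-au), m2 * phin + m4 * (-an), 0, m4 * mc;
           0,0,0,0,0; 0,0,0,0,0; 0,0,0,0,0; 0,0,0,0,0] := by
      rw [hM, hW]
      ext i j
      fin_cases i <;> fin_cases j <;>
        simp [Matrix.mul_apply, Fin.sum_univ_five, Matrix.vecHead, Matrix.vecTail] <;> ring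
    rw [key, e0, e1, e2, e4, hF]
  have hFW : F * W⁻¹ = M := by
    rw [← hMW, Matrix.mul_assoc, Matrix.mul_nonsing_inv _ hWunit, Matrix.mul_one]
  rw [hFW]
  set N : Matrix (Fin 5) (Fin 5) ℂ :=
    !![(R0:ℂ), (m1:ℂ), (m2:ℂ), 0, (m4:ℂ); 0,0,0,0,0; 0,0,0,0,0; 0,0,0,0,0; 0,0,0,0,0] with hN
  have hmapN : M.map Complex.ofReal = N := by
    rw [hM, hN]; ext i j; fin_cases i <;> fin_cases j <;> simp [Matrix.vecHead, Matrix.vecTail]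
  rw [hmapN]
  have hspec : spectrum ℂ N = {(R0:ℂ), 0} := by
    ext z
    rw [spectrum.mem_iff, Matrix.isUnit_iff_isUnit_det, isUnit_iff_ne_zero, not_not]
    have halg : algebraMap ℂ (Matrix (Fin 5) (Fin 5) ℂ) z - N =
        !![z - (R0:ℂ), -(m1:ℂ), -(m2:ℂ), 0, -(m4:ℂ);
           0, z, 0, 0, 0; 0, 0, z, 0, 0; 0, 0, 0, z, 0; 0, 0, 0, 0, z] := by
      rw [hN]; ext i j
      fin_cases i <;> fin_cases j <;>
        simp [Matrix.algebraMap_matrix_apply, Matrix.vecHead, Matrix.vecTail]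
    rw [halg]
    have hdet : (!![z - (R0:ℂ), -(m1:ℂ), -(m2:ℂ), 0, -(m4:ℂ);
        0, z, 0, 0, 0; 0, 0, z, 0, 0; 0, 0, 0, z, 0; 0, 0, 0, 0, z] :
        Matrix (Fin 5) (Fin 5) ℂ).det = (z - R0) * z ^ 4 := by
      simp [Matrix.det_succ_row_zero, Fin.sum_univ_succ, Matrix.vecHead, Matrix.vecTail]
      exact Or.inl (by ring)
    rw [hdet, mul_eq_zero, pow_eq_zero_iff (by norm_num : (4:ℕ) ≠ 0), sub_eq_zero]
    simp [Set.mem_insert_iff]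
  rw [spectralRadius, hspec]
  rw [show ({(R0:ℂ), 0} : Set ℂ) = insert (R0:ℂ) {0} from rfl, iSup_insert]
  simp only [Set.mem_singleton_iff, iSup_iSup_eq_left, nnnorm_zero, ENNReal.coe_zero]
  rw [sup_eq_left.mpr zero_le, Complex.nnnorm_real, ← enorm_eq_nnnorm,
    Real.enorm_eq_ofReal hR0pos.le]
end

section
/- Let all model parameters be positive and set φ_u = η_u+σ_u+μ, φ_n = η_n+σ_n+μ+δ_n. Define for complex λ the function H(λ) = (1−p)·γ·β1/((λ+φ_u)·(λ+γ+μ)) + p·γ·ν·β1/((λ+φ_n)·(λ+γ+μ)) + (1−p)·γ·α_u·β2·(Π/μ)/((λ+μ_c)·(λ+φ_u)·(λ+γ+μ)) + p·γ·α_n·β2·(Π/μ)/((λ+μ_c)·(λ+φ_n)·(λ+γ+μ)). Then for every λ ∈ ℂ with Re(λ) ≥ 0, all denominators are nonzero and |H(λ)| ≤ H(0), where H(0) is the real number ℛ₀. -/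
lemma key_abs_lb (a : ℝ) (ha : 0 < a) (lam : ℂ) (hl : 0 ≤ lam.re) :
    a ≤ ‖lam + (a : ℂ)‖ := by
  calc a ≤ (lam + (a : ℂ)).re := by simp [Complex.add_re]; linarith
  _ ≤ |(lam + (a : ℂ)).re| := le_abs_self _
  _ ≤ ‖lam + (a : ℂ)‖ := Complex.abs_re_le_norm _

lemma key_ne (a : ℝ) (ha : 0 < a) (lam : ℂ) (hl : 0 ≤ lam.re) :
    lam + (a : ℂ) ≠ 0 := by
  intro h
  have := key_abs_lb a ha lam hl
  rw [h] at this; simp at this; linarith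

lemma term_bound2 (c a b : ℝ) (hc : 0 ≤ c) (ha : 0 < a) (hb : 0 < b)
    (lam : ℂ) (hl : 0 ≤ lam.re) :
    ‖((c : ℝ) : ℂ) / ((lam + (a : ℂ)) * (lam + (b : ℂ)))‖ ≤ c / (a * b) := by
  rw [norm_div, norm_mul, Complex.norm_real, Real.norm_eq_abs, abs_of_nonneg hc]
  have h1 := key_abs_lb a ha lam hl
  have h2 := key_abs_lb b hb lam hl
  apply div_le_div_of_nonneg_left hc (by positivity)
  exact mul_le_mul h1 h2 (by linarith) (by positivity)

lemma term_bound3 (c a b d : ℝ) (hc : 0 ≤ c) (ha : 0 < a) (hb : 0 < b) (hd : 0 < d)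
    (lam : ℂ) (hl : 0 ≤ lam.re) :
    ‖((c : ℝ) : ℂ) / ((lam + (a : ℂ)) * (lam + (b : ℂ)) * (lam + (d : ℂ)))‖ ≤
      c / (a * b * d) := by
  rw [norm_div, norm_mul, norm_mul, Complex.norm_real, Real.norm_eq_abs, abs_of_nonneg hc]
  have h1 := key_abs_lb a ha lam hl
  have h2 := key_abs_lb b hb lam hl
  have h3 := key_abs_lb d hd lam hl
  apply div_le_div_of_nonneg_left hc (by positivity)
  exact mul_le_mul (mul_le_mul h1 h2 (by linarith) (by positivity)) h3
    (by linarith) (by positivity)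

/-- for every complex `λ` with `Re λ ≥ 0`, the denominators of the
rational function `H` are nonzero and `|H(λ)| ≤ H(0) = ℛ₀`. -/
theorem covid_H_modulus_bound
    (Pi b1 b2 nu th mu ga p eu en su sn sh dn dh au an mc : ℝ)
    (hPi : 0 < Pi) (hb1 : 0 < b1) (hb2 : 0 < b2) (hnu : 0 < nu) (hnu1 : nu < 1)
    (hth : 0 < th) (hmu : 0 < mu) (hga : 0 < ga) (hp : 0 < p) (hp1 : p < 1)
    (heu : 0 < eu) (hen : 0 < en) (hsu : 0 < su) (hsn : 0 < sn) (hsh : 0 < sh)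
    (hdn : 0 < dn) (hdh : 0 < dh) (hau : 0 < au) (han : 0 < an) (hmc : 0 < mc)
    (phiu phin : ℝ)
    (hphiu : phiu = eu + su + mu) (hphin : phin = en + sn + mu + dn)
    (H : ℂ → ℂ)
    (hH : ∀ lam : ℂ, H lam =
      ((((1 - p) * ga * b1 : ℝ) : ℂ) / ((lam + (phiu : ℂ)) * (lam + ((ga + mu : ℝ) : ℂ))))
      + (((p * ga * nu * b1 : ℝ) : ℂ) / ((lam + (phin : ℂ)) * (lam + ((ga + mu : ℝ) : ℂ))))
      + ((((1 - p) * ga * au * b2 * (Pi / mu) : ℝ) : ℂ) /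
          ((lam + (mc : ℂ)) * (lam + (phiu : ℂ)) * (lam + ((ga + mu : ℝ) : ℂ))))
      + (((p * ga * an * b2 * (Pi / mu) : ℝ) : ℂ) /
          ((lam + (mc : ℂ)) * (lam + (phin : ℂ)) * (lam + ((ga + mu : ℝ) : ℂ)))))
    (R0 : ℝ)
    (hR0 : R0 = (1 - p) * ga * b1 / (phiu * (ga + mu))
      + p * ga * nu * b1 / (phin * (ga + mu))
      + (1 - p) * ga * au * b2 * (Pi / mu) / (mc * phiu * (ga + mu))
      + p * ga * an * b2 * (Pi / mu) / (mc * phin * (ga + mu))) :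
    ∀ lam : ℂ, 0 ≤ lam.re →
      (lam + (phiu : ℂ) ≠ 0 ∧ lam + (phin : ℂ) ≠ 0 ∧ lam + (mc : ℂ) ≠ 0 ∧
        lam + ((ga + mu : ℝ) : ℂ) ≠ 0) ∧
      ‖H lam‖ ≤ R0 := by
  intro lam hl
  have hphiu' : 0 < phiu := by rw [hphiu]; linarith
  have hphin' : 0 < phin := by rw [hphin]; linarith
  have hgm : 0 < ga + mu := by linarith
  refine ⟨⟨key_ne _ hphiu' _ hl, key_ne _ hphin' _ hl, key_ne _ hmc _ hl,
    key_ne _ hgm _ hl⟩, ?_⟩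
  rw [hH, hR0]
  have hp' : (0:ℝ) ≤ 1 - p := by linarith
  have c1 : (0:ℝ) ≤ (1 - p) * ga * b1 := by positivity
  have c2 : (0:ℝ) ≤ p * ga * nu * b1 := by positivity
  have c3 : (0:ℝ) ≤ (1 - p) * ga * au * b2 * (Pi / mu) := by positivity
  have c4 : (0:ℝ) ≤ p * ga * an * b2 * (Pi / mu) := by positivity
  have t1 := term_bound2 _ _ _ c1 hphiu' hgm lam hl
  have t2 := term_bound2 _ _ _ c2 hphin' hgm lam hl
  have t3 := term_bound3 _ _ _ _ c3 hmc hphiu' hgm lam hl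
  have t4 := term_bound3 _ _ _ _ c4 hmc hphin' hgm lam hl
  refine le_trans (norm_add_le _ _) (add_le_add ?_ t4)
  refine le_trans (norm_add_le _ _) (add_le_add ?_ t3)
  exact le_trans (norm_add_le _ _) (add_le_add t1 t2)
end

section
/- Let all model parameters be positive and set φ_u = η_u+σ_u+μ, φ_n = η_n+σ_n+μ+δ_n. Let M be the 4×4 real matrix with rows (−(γ+μ), β1, ν·β1, Π·β2/μ), ((1−p)·γ, −φ_u, 0, 0), (p·γ, 0, −φ_n, 0), (0, α_u, α_n, −μ_c). Then for every complex λ with λ ∉ {−μ_c, −φ_n, −φ_u, −(γ+μ)}, one has det(M − λ·I₄) = (λ+μ_c)·(λ+φ_n)·(λ+φ_u)·(λ+γ+μ)·(1 − H(λ)), where H(λ) = (1−p)·γ·β1/((λ+φ_u)·(λ+γ+μ)) + p·γ·ν·β1/((λ+φ_n)·(λ+γ+μ)) + (1−p)·γ·α_u·β2·(Π/μ)/((λ+μ_c)·(λ+φ_u)·(λ+γ+μ)) + p·γ·α_n·β2·(Π/μ)/((λ+μ_c)·(λ+φ_n)·(λ+γ+μ)). In particular det(M − λ·I₄) = 0 if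 and only if H(λ) = 1 for such λ. -/
set_option maxHeartbeats 1000000

theorem det4 {R : Type*} [CommRing R] (a b c d e f g h i j k l m n o p : R) :
    Matrix.det !![a,b,c,d; e,f,g,h; i,j,k,l; m,n,o,p] =
      a*(f*(k*p-l*o) - g*(j*p-l*n) + h*(j*o-k*n))
    - b*(e*(k*p-l*o) - g*(i*p-l*m) + h*(i*o-k*m))
    + c*(e*(j*p-l*n) - f*(i*p-l*m) + h*(i*n-j*m))
    - d*(e*(j*o-k*n) - f*(i*o-k*m) + g*(i*n-j*m)) := by
  rw [Matrix.det_succ_row_zero, Fin.sum_univ_four]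
  norm_num [Matrix.det_fin_three, Matrix.submatrix, Fin.succAbove, Fin.lt_def,
    show ((3:Fin 4):ℕ) = 3 from rfl, show (Fin.castSucc 2 : Fin 4) = 2 from rfl]
  simp [Matrix.vecHead, Matrix.vecTail]
  ring

theorem aux_clear (c n u a A B C D : ℂ) (hc : c ≠ 0) (hn : n ≠ 0) (hu : u ≠ 0)
    (ha : a ≠ 0) :
    c * n * u * a * (1 - (A / (u * a) + B / (n * a) + C / (c * u * a) + D / (c * n * a))) =
      c * n * u * a - A * c * n - B * c * u - C * n - D * u := by
  have e1 : c * n * u * a * (A / (u * a)) = A * c * n := by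
    field_simp
  have e2 : c * n * u * a * (B / (n * a)) = B * c * u := by
    field_simp
  have e3 : c * n * u * a * (C / (c * u * a)) = C * n := by
    field_simp
  have e4 : c * n * u * a * (D / (c * n * a)) = D * u := by
    field_simp
  calc c * n * u * a * (1 - (A / (u * a) + B / (n * a) + C / (c * u * a) + D / (c * n * a)))
      = c * n * u * a - (c * n * u * a * (A / (u * a)) + c * n * u * a * (B / (n * a))
        + c * n * u * a * (C / (c * u * a)) + c * n * u * a * (D / (c * n * a))) := by ring
    _ = _ := by rw [e1, e2, e3, e4]; ring
/-- factorization of the characteristic determinant of the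
nontrivial 4×4 block `M` of the Jacobian at the disease-free equilibrium:
`det(M − λI) = (λ+μ_c)(λ+φ_n)(λ+φ_u)(λ+γ+μ)(1 − H(λ))`, hence
`det(M − λI) = 0 ↔ H(λ) = 1` away from the poles. -/
theorem covid_char_det_factorization
    (Pi b1 b2 nu th mu ga p eu en su sn sh dn dh au an mc : ℝ)
    (hPi : 0 < Pi) (hb1 : 0 < b1) (hb2 : 0 < b2) (hnu : 0 < nu) (hnu1 : nu < 1)
    (hth : 0 < th) (hmu : 0 < mu) (hga : 0 < ga) (hp : 0 < p) (hp1 : p < 1)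
    (heu : 0 < eu) (hen : 0 < en) (hsu : 0 < su) (hsn : 0 < sn) (hsh : 0 < sh)
    (hdn : 0 < dn) (hdh : 0 < dh) (hau : 0 < au) (han : 0 < an) (hmc : 0 < mc)
    (phiu phin : ℝ)
    (hphiu : phiu = eu + su + mu) (hphin : phin = en + sn + mu + dn)
    (M : Matrix (Fin 4) (Fin 4) ℝ)
    (hM : M = !![-(ga + mu), b1, nu * b1, Pi * b2 / mu;
                 (1 - p) * ga, -phiu, 0, 0;
                 p * ga, 0, -phin, 0;
                 0, au, an, -mc])
    (H : ℂ → ℂ)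
    (hH : ∀ lam : ℂ, H lam =
      ((((1 - p) * ga * b1 : ℝ) : ℂ) / ((lam + (phiu : ℂ)) * (lam + ((ga + mu : ℝ) : ℂ))))
      + (((p * ga * nu * b1 : ℝ) : ℂ) / ((lam + (phin : ℂ)) * (lam + ((ga + mu : ℝ) : ℂ))))
      + ((((1 - p) * ga * au * b2 * (Pi / mu) : ℝ) : ℂ) /
          ((lam + (mc : ℂ)) * (lam + (phiu : ℂ)) * (lam + ((ga + mu : ℝ) : ℂ))))
      + (((p * ga * an * b2 * (Pi / mu) : ℝ) : ℂ) /
          ((lam + (mc : ℂ)) * (lam + (phin : ℂ)) * (lam + ((ga + mu : ℝ) : ℂ))))) :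
    ∀ lam : ℂ, lam ≠ -(mc : ℂ) → lam ≠ -(phin : ℂ) → lam ≠ -(phiu : ℂ) →
      lam ≠ -((ga + mu : ℝ) : ℂ) →
      (M.map Complex.ofReal - lam • (1 : Matrix (Fin 4) (Fin 4) ℂ)).det =
        (lam + (mc : ℂ)) * (lam + (phin : ℂ)) * (lam + (phiu : ℂ)) *
          (lam + ((ga + mu : ℝ) : ℂ)) * (1 - H lam) ∧
      ((M.map Complex.ofReal - lam • (1 : Matrix (Fin 4) (Fin 4) ℂ)).det = 0 ↔
        H lam = 1) := by
  intro lam h1 h2 h3 h4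
  have hmu' : (mu : ℂ) ≠ 0 := Complex.ofReal_ne_zero.2 hmu.ne'
  have d1 : lam + (mc : ℂ) ≠ 0 := fun h => h1 (by linear_combination h)
  have d2 : lam + (phin : ℂ) ≠ 0 := fun h => h2 (by linear_combination h)
  have d3 : lam + (phiu : ℂ) ≠ 0 := fun h => h3 (by linear_combination h)
  have d4 : lam + ((ga + mu : ℝ) : ℂ) ≠ 0 := fun h => h4 (by linear_combination h)
  have hmat : M.map Complex.ofReal - lam • (1 : Matrix (Fin 4) (Fin 4) ℂ) =
      !![-((ga:ℂ) + mu) - lam, (b1:ℂ), (nu:ℂ) * b1, (Pi:ℂ) * b2 / mu;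
         (1 - (p:ℂ)) * ga, -(phiu:ℂ) - lam, 0, 0;
         (p:ℂ) * ga, 0, -(phin:ℂ) - lam, 0;
         0, (au:ℂ), (an:ℂ), -(mc:ℂ) - lam] := by
    subst hM
    ext i j
    fin_cases i <;> fin_cases j <;>
      simp [Matrix.one_apply] <;> push_cast <;> ring
  have key : (M.map Complex.ofReal - lam • (1 : Matrix (Fin 4) (Fin 4) ℂ)).det =
      (lam + (mc : ℂ)) * (lam + (phin : ℂ)) * (lam + (phiu : ℂ)) *
        (lam + ((ga + mu : ℝ) : ℂ)) * (1 - H lam) := by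
    rw [hmat, det4, hH, aux_clear _ _ _ _ _ _ _ _ d1 d2 d3 d4]
    push_cast
    field_simp
    ring
  refine ⟨key, ?_⟩
  rw [key]
  constructor
  · intro h
    rcases mul_eq_zero.1 h with h | h
    · exact absurd h (mul_ne_zero (mul_ne_zero (mul_ne_zero d1 d2) d3) d4)
    · linear_combination -h
  · intro h
    rw [h]
    ring
end

section
/- Let all model parameters be positive, set φ_u = η_u+σ_u+μ, φ_n = η_n+σ_n+μ+δ_n, and define for real λ ≥ 0 the function H(λ) = (1−p)·γ·β1/((λ+φ_u)·(λ+γ+μ)) + p·γ·ν·β1/((λ+φ_n)·(λ+γ+μ)) + (1−p)·γ·α_u·β2·(Π/μ)/((λ+μ_c)·(λ+φ_u)·(λ+γ+μ)) + p·γ·α_n·β2·(Π/μ)/((λ+μ_c)·(λ+φ_n)·(λ+γ+μ)). If ℛ₀ = H(0) > 1, then there exists a real λ* > 0 with H(λ*) = 1; consequently the Jacobian at the disease-free equilibrium has a positive real eigenvalue and the disease-free equilibrium is unstable. -/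
lemma cons_val5 {α : Type*} (x : α) (u : Fin 6 → α) : Matrix.vecCons x u 5 = u 4 := rfl
lemma cons_val6 {α : Type*} (x : α) (u : Fin 6 → α) : Matrix.vecCons x u 6 = u 5 := rfl
lemma cons_val5' {α : Type*} (x : α) (u : Fin 5 → α) : Matrix.vecCons x u 5 = u 4 := rfl

set_option maxHeartbeats 1000000 in
lemma detkey (x1 x2 x3 x4 x5 x6 x7 b nb q tth g1 g2 eu en su sn sh au an : ℝ) :
    (!![x5, 0, b, nb, 0, -tth, q;
        0, x3, -b, -nb, 0, 0, -q;
        0, -g1, x1, 0, 0, 0, 0;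
        0, -g2, 0, x2, 0, 0, 0;
        0, 0, -eu, -en, x6, 0, 0;
        0, 0, -su, -sn, -sh, x7, 0;
        0, 0, -au, -an, 0, 0, x4] : Matrix (Fin 7) (Fin 7) ℝ).det
    = x5 * x6 * x7 *
      (x4 * x1 * x2 * x3 - g1 * b * x2 * x4 - g2 * nb * x1 * x4
        - g1 * au * q * x2 - g2 * an * q * x1) := by
  set M : Matrix (Fin 7) (Fin 7) ℝ :=
    !![x5, 0, b, nb, 0, -tth, q;
        0, x3, -b, -nb, 0, 0, -q;
        0, -g1, x1, 0, 0, 0, 0;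
        0, -g2, 0, x2, 0, 0, 0;
        0, 0, -eu, -en, x6, 0, 0;
        0, 0, -su, -sn, -sh, x7, 0;
        0, 0, -au, -an, 0, 0, x4] with hMdef
  let e : (Fin 4 ⊕ Fin 3) ≃ Fin 7 := finSumFinEquiv.trans
    ⟨![1,2,3,6,0,4,5], ![4,0,1,2,5,6,3], by decide, by decide⟩
  have h1 : (M.submatrix e e).det = M.det := Matrix.det_submatrix_equiv_self e M
  have h2 : M.submatrix e e = Matrix.fromBlocks
      (!![x3, -b, -nb, -q; -g1, x1, 0, 0; -g2, 0, x2, 0; 0, -au, -an, x4])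
      0
      (!![0, b, nb, q; 0, -eu, -en, 0; 0, -su, -sn, 0])
      (!![x5, 0, -tth; 0, x6, 0; 0, -sh, x7]) := by
    ext i j
    rcases i with i | i <;> rcases j with j | j <;>
      fin_cases i <;> fin_cases j <;> rfl
  have h3 := Matrix.det_fromBlocks_zero₁₂
      (!![x3, -b, -nb, -q; -g1, x1, 0, 0; -g2, 0, x2, 0; 0, -au, -an, x4])
      (!![0, b, nb, q; 0, -eu, -en, 0; 0, -su, -sn, 0])
      (!![x5, 0, -tth; 0, x6, 0; 0, -sh, x7])
  rw [← h1, h2, h3, Matrix.det_fin_three]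
  have h4 : (!![x3, -b, -nb, -q; -g1, x1, 0, 0; -g2, 0, x2, 0; 0, -au, -an, x4]
      : Matrix (Fin 4) (Fin 4) ℝ).det
      = x4 * x1 * x2 * x3 - g1 * b * x2 * x4 - g2 * nb * x1 * x4
        - g1 * au * q * x2 - g2 * an * q * x1 := by
    simp [Matrix.det_succ_row_zero, Fin.sum_univ_succ, Fin.succAbove,
      Fin.castSucc, Fin.castAdd, Fin.castLE]
    ring
  rw [h4]
  simp [Matrix.vecHead, Matrix.vecTail]
  ring

set_option maxHeartbeats 1000000 in
/-- if `ℛ₀ = H(0) > 1` there is a real `λ* > 0` with `H(λ*) = 1`;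
consequently `λ*` is a positive real eigenvalue of the Jacobian `J` at the
disease-free equilibrium, which is therefore unstable. -/
theorem covid_DFE_unstable
    (Pi b1 b2 nu th mu ga p eu en su sn sh dn dh au an mc : ℝ)
    (hPi : 0 < Pi) (hb1 : 0 < b1) (hb2 : 0 < b2) (hnu : 0 < nu) (hnu1 : nu < 1)
    (hth : 0 < th) (hmu : 0 < mu) (hga : 0 < ga) (hp : 0 < p) (hp1 : p < 1)
    (heu : 0 < eu) (hen : 0 < en) (hsu : 0 < su) (hsn : 0 < sn) (hsh : 0 < sh)
    (hdn : 0 < dn) (hdh : 0 < dh) (hau : 0 < au) (han : 0 < an) (hmc : 0 < mc)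
    (phiu phin phih : ℝ)
    (hphiu : phiu = eu + su + mu) (hphin : phin = en + sn + mu + dn)
    (hphih : phih = sh + mu + dh)
    (H : ℝ → ℝ)
    (hH : ∀ lam ≥ (0 : ℝ), H lam =
      (1 - p) * ga * b1 / ((lam + phiu) * (lam + ga + mu))
      + p * ga * nu * b1 / ((lam + phin) * (lam + ga + mu))
      + (1 - p) * ga * au * b2 * (Pi / mu) / ((lam + mc) * (lam + phiu) * (lam + ga + mu))
      + p * ga * an * b2 * (Pi / mu) / ((lam + mc) * (lam + phin) * (lam + ga + mu)))
    (J : Matrix (Fin 7) (Fin 7) ℝ)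
    (hJ : J = !![-mu, 0, -b1, -nu * b1, 0, th, -Pi * b2 / mu;
                 0, -(ga + mu), b1, nu * b1, 0, 0, Pi * b2 / mu;
                 0, (1 - p) * ga, -phiu, 0, 0, 0, 0;
                 0, p * ga, 0, -phin, 0, 0, 0;
                 0, 0, eu, en, -phih, 0, 0;
                 0, 0, su, sn, sh, -(th + mu), 0;
                 0, 0, au, an, 0, 0, -mc])
    (hR0 : H 0 > 1) :
    ∃ lamstar : ℝ, 0 < lamstar ∧ H lamstar = 1 ∧
      (lamstar • (1 : Matrix (Fin 7) (Fin 7) ℝ) - J).det = 0 := by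
  have hphiu' : 0 < phiu := by rw [hphiu]; linarith
  have hphin' : 0 < phin := by rw [hphin]; linarith
  have hphih' : 0 < phih := by rw [hphih]; linarith
  have hp' : 0 < 1 - p := by linarith
  -- numerators
  set N1 := (1 - p) * ga * b1 with hN1
  set N2 := p * ga * nu * b1 with hN2
  set N3 := (1 - p) * ga * au * b2 * (Pi / mu) with hN3
  set N4 := p * ga * an * b2 * (Pi / mu) with hN4
  have hN1p : 0 < N1 := by positivity
  have hN2p : 0 < N2 := by positivity
  have hN3p : 0 < N3 := by positivity
  have hN4p : 0 < N4 := by positivity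
  set f : ℝ → ℝ := fun lam =>
      N1 / ((lam + phiu) * (lam + ga + mu))
      + N2 / ((lam + phin) * (lam + ga + mu))
      + N3 / ((lam + mc) * (lam + phiu) * (lam + ga + mu))
      + N4 / ((lam + mc) * (lam + phin) * (lam + ga + mu)) with hf
  have hHf : ∀ lam ≥ (0 : ℝ), H lam = f lam := fun lam hlam => hH lam hlam
  set Mb : ℝ := 1 + N1 + N2 + N3 + N4 with hMb
  have hMb1 : 1 ≤ Mb := by linarith
  have hMbpos : (0:ℝ) < Mb := by linarith
  -- f Mb < 1
  have hfM : f Mb < 1 := by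
    have key : ∀ (N d : ℝ), 0 < N → Mb ≤ d → N / d ≤ N / Mb := by
      intro N d hN hd
      exact div_le_div_of_nonneg_left (le_of_lt hN) hMbpos hd
    have mulge : ∀ u v : ℝ, Mb ≤ u → 1 ≤ v → Mb ≤ u * v := by
      intro u v hu hv
      calc Mb ≤ u := hu
        _ = u * 1 := (mul_one u).symm
        _ ≤ u * v := by
            apply mul_le_mul_of_nonneg_left hv
            linarith
    have t1 : N1 / ((Mb + phiu) * (Mb + ga + mu)) ≤ N1 / Mb := by
      apply key _ _ hN1p
      exact mulge _ _ (by linarith) (by linarith)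
    have t2 : N2 / ((Mb + phin) * (Mb + ga + mu)) ≤ N2 / Mb := by
      apply key _ _ hN2p
      exact mulge _ _ (by linarith) (by linarith)
    have t3 : N3 / ((Mb + mc) * (Mb + phiu) * (Mb + ga + mu)) ≤ N3 / Mb := by
      apply key _ _ hN3p
      exact mulge _ _ (mulge _ _ (by linarith) (by linarith)) (by linarith)
    have t4 : N4 / ((Mb + mc) * (Mb + phin) * (Mb + ga + mu)) ≤ N4 / Mb := by
      apply key _ _ hN4p
      exact mulge _ _ (mulge _ _ (by linarith) (by linarith)) (by linarith)
    have hfMb : f Mb = N1 / ((Mb + phiu) * (Mb + ga + mu))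
      + N2 / ((Mb + phin) * (Mb + ga + mu))
      + N3 / ((Mb + mc) * (Mb + phiu) * (Mb + ga + mu))
      + N4 / ((Mb + mc) * (Mb + phin) * (Mb + ga + mu)) := rfl
    have hsplit : (N1 + N2 + N3 + N4) / Mb = N1/Mb + N2/Mb + N3/Mb + N4/Mb := by ring
    have hlt : (N1 + N2 + N3 + N4) / Mb < 1 := by
      rw [div_lt_one hMbpos]; linarith
    rw [hfMb]
    rw [hsplit] at hlt
    linarith
  -- continuity of f on Icc 0 Mb
  have hc : ContinuousOn f (Set.Icc 0 Mb) := by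
    have hpos : ∀ c : ℝ, 0 < c → ∀ x ∈ Set.Icc (0:ℝ) Mb, x + c ≠ 0 := by
      intro c hcpos x hx
      have h0 : 0 ≤ x := hx.1
      exact ne_of_gt (by linarith)
    have cid : ContinuousOn (fun x : ℝ => x) (Set.Icc 0 Mb) := continuousOn_id
    apply ContinuousOn.add
    apply ContinuousOn.add
    apply ContinuousOn.add
    · exact continuousOn_const.div (((cid.add continuousOn_const)).mul
        ((cid.add continuousOn_const).add continuousOn_const))
        (fun x hx => by
          have h1 := hpos phiu hphiu' x hx
          have h2 : x + ga + mu ≠ 0 := by have := hx.1; exact ne_of_gt (by linarith)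
          exact mul_ne_zero h1 h2)
    · exact continuousOn_const.div (((cid.add continuousOn_const)).mul
        ((cid.add continuousOn_const).add continuousOn_const))
        (fun x hx => by
          have h1 := hpos phin hphin' x hx
          have h2 : x + ga + mu ≠ 0 := by have := hx.1; exact ne_of_gt (by linarith)
          exact mul_ne_zero h1 h2)
    · exact continuousOn_const.div ((((cid.add continuousOn_const)).mul
        (cid.add continuousOn_const)).mul
        ((cid.add continuousOn_const).add continuousOn_const))
        (fun x hx => by
          have h1 := hpos mc hmc x hx
          have h2 := hpos phiu hphiu' x hx
          have h3 : x + ga + mu ≠ 0 := by have := hx.1; exact ne_of_gt (by linarith)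
          exact mul_ne_zero (mul_ne_zero h1 h2) h3)
    · exact continuousOn_const.div ((((cid.add continuousOn_const)).mul
        (cid.add continuousOn_const)).mul
        ((cid.add continuousOn_const).add continuousOn_const))
        (fun x hx => by
          have h1 := hpos mc hmc x hx
          have h2 := hpos phin hphin' x hx
          have h3 : x + ga + mu ≠ 0 := by have := hx.1; exact ne_of_gt (by linarith)
          exact mul_ne_zero (mul_ne_zero h1 h2) h3)
  -- IVT
  have hf0 : 1 < f 0 := by rw [← hHf 0 le_rfl]; exact hR0
  have hmem : (1:ℝ) ∈ Set.Icc (f Mb) (f 0) := ⟨le_of_lt hfM, le_of_lt hf0⟩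
  obtain ⟨lam, hlamIcc, hlameq⟩ :=
    intermediate_value_Icc' (le_of_lt hMbpos) hc hmem
  have hlam0 : 0 ≤ lam := hlamIcc.1
  have hlampos : 0 < lam := by
    rcases lt_or_eq_of_le hlam0 with h | h
    · exact h
    · exfalso; rw [← h] at hlameq; rw [hlameq] at hf0; linarith
  have hHlam : H lam = 1 := by rw [hHf lam hlam0, hlameq]
  refine ⟨lam, hlampos, hHlam, ?_⟩
  -- determinant
  have hM : lam • (1 : Matrix (Fin 7) (Fin 7) ℝ) - J =
      !![lam + mu, 0, b1, nu * b1, 0, -th, Pi * b2 / mu;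
         0, lam + (ga + mu), -b1, -(nu * b1), 0, 0, -(Pi * b2 / mu);
         0, -((1 - p) * ga), lam + phiu, 0, 0, 0, 0;
         0, -(p * ga), 0, lam + phin, 0, 0, 0;
         0, 0, -eu, -en, lam + phih, 0, 0;
         0, 0, -su, -sn, -sh, lam + (th + mu), 0;
         0, 0, -au, -an, 0, 0, lam + mc] := by
    subst hJ
    ext i j
    fin_cases i <;> fin_cases j <;>
      simp [Matrix.one_apply, Matrix.vecHead, Matrix.vecTail, cons_val5, cons_val6, cons_val5',
        Matrix.cons_val_two, Matrix.cons_val_three, Matrix.cons_val_four] <;> ring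
  rw [hM, detkey]
  have d1 : lam + phiu ≠ 0 := ne_of_gt (by linarith)
  have d2 : lam + phin ≠ 0 := ne_of_gt (by linarith)
  have d3 : lam + ga + mu ≠ 0 := ne_of_gt (by linarith)
  have d4 : lam + mc ≠ 0 := ne_of_gt (by linarith)
  have hfl : f lam = N1 / ((lam + phiu) * (lam + ga + mu))
      + N2 / ((lam + phin) * (lam + ga + mu))
      + N3 / ((lam + mc) * (lam + phiu) * (lam + ga + mu))
      + N4 / ((lam + mc) * (lam + phin) * (lam + ga + mu)) := by rw [hf]
  have hdiv : ∀ A u v : ℝ, u ≠ 0 → A / u * (u * v) = A * v := by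
    intro A u v hu
    field_simp
    try ring
  have e1 := hdiv N1 ((lam + phiu) * (lam + ga + mu)) ((lam + mc) * (lam + phin))
    (mul_ne_zero d1 d3)
  have e2 := hdiv N2 ((lam + phin) * (lam + ga + mu)) ((lam + mc) * (lam + phiu))
    (mul_ne_zero d2 d3)
  have e3 := hdiv N3 ((lam + mc) * (lam + phiu) * (lam + ga + mu)) (lam + phin)
    (mul_ne_zero (mul_ne_zero d4 d1) d3)
  have e4 := hdiv N4 ((lam + mc) * (lam + phin) * (lam + ga + mu)) (lam + phiu)
    (mul_ne_zero (mul_ne_zero d4 d2) d3)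
  have hmul : f lam * ((lam + mc) * (lam + phiu) * (lam + phin) * (lam + ga + mu))
      = N1 * ((lam + mc) * (lam + phin)) + N2 * ((lam + mc) * (lam + phiu))
        + N3 * (lam + phin) + N4 * (lam + phiu) := by
    rw [hfl]
    linear_combination e1 + e2 + e3 + e4
  have h1 : f lam = 1 := hlameq
  have hcore0 : (lam + mc) * (lam + phiu) * (lam + phin) * (lam + (ga + mu))
      - (1 - p) * ga * b1 * (lam + phin) * (lam + mc)
      - p * ga * (nu * b1) * (lam + phiu) * (lam + mc)
      - (1 - p) * ga * au * (Pi * b2 / mu) * (lam + phin)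
      - p * ga * an * (Pi * b2 / mu) * (lam + phiu) = 0 := by
    linear_combination hmul
      - ((lam + mc) * (lam + phiu) * (lam + phin) * (lam + ga + mu)) * h1
      + ((lam + phin) * (lam + mc)) * hN1 + ((lam + phiu) * (lam + mc)) * hN2
      + (lam + phin) * hN3 + (lam + phiu) * hN4
  rw [hcore0]
  ring
end

section
/- Let all model parameters be positive and set φ_u = η_u+σ_u+μ, φ_n = η_n+σ_n+μ+δ_n, φ_h = σ_h+μ+δ_h. Let J be the 7×7 real Jacobian matrix of the COVID-19 model at the disease-free equilibrium, with rows (ordering coordinates S, E, I_u, I_n, I_h, R, V): (−μ, 0, −β1, −ν·β1, 0, θ, −Π·β2/μ), (0, −(γ+μ), β1, ν·β1, 0, 0, Π·β2/μ), (0, (1−p)·γ, −φ_u, 0, 0, 0, 0), (0, p·γ, 0, −φ_n, 0, 0, 0), (0, 0, η_u, η_n, −φ_h, 0, 0), (0, 0, σ_u, σ_n, σ_h, −(θ+μ), 0), (0, 0, α_u, α_n, 0, 0, −μ_c), and let M be the 4×4 matrix with rows (−(γ+μ), β1, ν·β1, Π·β2/μ), ((1−p)·γ, −φ_u, 0, 0),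 (p·γ, 0, −φ_n, 0), (0, α_u, α_n, −μ_c). Then for all complex λ, det(λ·I₇ − J) = (λ+μ)·(λ+θ+μ)·(λ+φ_h)·det(λ·I₄ − M); in particular −μ, −(θ+μ), and −φ_h are eigenvalues of J. -/
set_option maxRecDepth 100000 in
set_option maxHeartbeats 1000000 in
theorem key7 (Pi b1 b2 nu th mu ga p eu en su sn sh au an mc phiu phin phih : ℂ) (lam : ℂ) :
    (!![lam+mu, 0, b1, nu*b1, 0, -th, Pi*b2/mu;
        0, lam+(ga+mu), -b1, -(nu*b1), 0, 0, -(Pi*b2/mu);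
        0, -((1-p)*ga), lam+phiu, 0, 0, 0, 0;
        0, -(p*ga), 0, lam+phin, 0, 0, 0;
        0, 0, -eu, -en, lam+phih, 0, 0;
        0, 0, -su, -sn, -sh, lam+(th+mu), 0;
        0, 0, -au, -an, 0, 0, lam+mc] : Matrix (Fin 7) (Fin 7) ℂ).det =
    (lam + mu) * (lam + (th + mu)) * (lam + phih) *
    (!![lam+(ga+mu), -b1, -(nu*b1), -(Pi*b2/mu);
        -((1-p)*ga), lam+phiu, 0, 0;
        -(p*ga), 0, lam+phin, 0;
        0, -au, -an, lam+mc] : Matrix (Fin 4) (Fin 4) ℂ).det := by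
  simp [Matrix.det_succ_column_zero, Fin.sum_univ_succ, Fin.succAbove]
  ring

set_option maxHeartbeats 4000000 in
/-- factorization of the characteristic polynomial of the 7×7
Jacobian `J` at the disease-free equilibrium:
`det(λI₇ − J) = (λ+μ)(λ+θ+μ)(λ+φ_h) det(λI₄ − M)`; in particular `−μ`,
`−(θ+μ)` and `−φ_h` are eigenvalues of `J`. -/
theorem covid_jacobian_det_factorization
    (Pi b1 b2 nu th mu ga p eu en su sn sh dn dh au an mc : ℝ)
    (hPi : 0 < Pi) (hb1 : 0 < b1) (hb2 : 0 < b2) (hnu : 0 < nu) (hnu1 : nu < 1)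
    (hth : 0 < th) (hmu : 0 < mu) (hga : 0 < ga) (hp : 0 < p) (hp1 : p < 1)
    (heu : 0 < eu) (hen : 0 < en) (hsu : 0 < su) (hsn : 0 < sn) (hsh : 0 < sh)
    (hdn : 0 < dn) (hdh : 0 < dh) (hau : 0 < au) (han : 0 < an) (hmc : 0 < mc)
    (phiu phin phih : ℝ)
    (hphiu : phiu = eu + su + mu) (hphin : phin = en + sn + mu + dn)
    (hphih : phih = sh + mu + dh)
    (J : Matrix (Fin 7) (Fin 7) ℝ)
    (hJ : J = !![-mu, 0, -b1, -nu * b1, 0, th, -Pi * b2 / mu;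
                 0, -(ga + mu), b1, nu * b1, 0, 0, Pi * b2 / mu;
                 0, (1 - p) * ga, -phiu, 0, 0, 0, 0;
                 0, p * ga, 0, -phin, 0, 0, 0;
                 0, 0, eu, en, -phih, 0, 0;
                 0, 0, su, sn, sh, -(th + mu), 0;
                 0, 0, au, an, 0, 0, -mc])
    (M : Matrix (Fin 4) (Fin 4) ℝ)
    (hM : M = !![-(ga + mu), b1, nu * b1, Pi * b2 / mu;
                 (1 - p) * ga, -phiu, 0, 0;
                 p * ga, 0, -phin, 0;
                 0, au, an, -mc]) :
    (∀ lam : ℂ,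
      (lam • (1 : Matrix (Fin 7) (Fin 7) ℂ) - J.map Complex.ofReal).det =
        (lam + (mu : ℂ)) * (lam + ((th + mu : ℝ) : ℂ)) * (lam + (phih : ℂ)) *
          (lam • (1 : Matrix (Fin 4) (Fin 4) ℂ) - M.map Complex.ofReal).det) ∧
    ((-mu) • (1 : Matrix (Fin 7) (Fin 7) ℝ) - J).det = 0 ∧
    ((-(th + mu)) • (1 : Matrix (Fin 7) (Fin 7) ℝ) - J).det = 0 ∧
    ((-phih) • (1 : Matrix (Fin 7) (Fin 7) ℝ) - J).det = 0 := by
  have key : ∀ lam : ℂ,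
      (lam • (1 : Matrix (Fin 7) (Fin 7) ℂ) - J.map Complex.ofReal).det =
        (lam + (mu : ℂ)) * (lam + ((th + mu : ℝ) : ℂ)) * (lam + (phih : ℂ)) *
          (lam • (1 : Matrix (Fin 4) (Fin 4) ℂ) - M.map Complex.ofReal).det := by
    intro lam
    have e7 : lam • (1 : Matrix (Fin 7) (Fin 7) ℂ) - J.map Complex.ofReal =
        !![lam+(mu:ℂ), 0, (b1:ℂ), (nu:ℂ)*(b1:ℂ), 0, -(th:ℂ), (Pi:ℂ)*(b2:ℂ)/(mu:ℂ);
           0, lam+((ga:ℂ)+(mu:ℂ)), -(b1:ℂ), -((nu:ℂ)*(b1:ℂ)), 0, 0, -((Pi:ℂ)*(b2:ℂ)/(mu:ℂ));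
           0, -((1-(p:ℂ))*(ga:ℂ)), lam+(phiu:ℂ), 0, 0, 0, 0;
           0, -((p:ℂ)*(ga:ℂ)), 0, lam+(phin:ℂ), 0, 0, 0;
           0, 0, -(eu:ℂ), -(en:ℂ), lam+(phih:ℂ), 0, 0;
           0, 0, -(su:ℂ), -(sn:ℂ), -(sh:ℂ), lam+((th:ℂ)+(mu:ℂ)), 0;
           0, 0, -(au:ℂ), -(an:ℂ), 0, 0, lam+(mc:ℂ)] := by
      subst hJ
      ext i j
      fin_cases i <;> fin_cases j <;>
        (norm_num [Matrix.one_apply, Fin.ext_iff, Matrix.vecHead, Matrix.vecTail, Function.comp, Matrix.cons_val_succ, show (5:Fin 7)=(4:Fin 6).succ from rfl, show (6:Fin 7)=(5:Fin 6).succ from rfl, show (4:Fin 6)=(3:Fin 5).succ from rfl, show (5:Fin 6)=(4:Fin 5).succ from rfl, show (4:Fin 5)=(3:Fin 4).succ from rfl]; try (push_cast; ring))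
    have e4 : lam • (1 : Matrix (Fin 4) (Fin 4) ℂ) - M.map Complex.ofReal =
        !![lam+((ga:ℂ)+(mu:ℂ)), -(b1:ℂ), -((nu:ℂ)*(b1:ℂ)), -((Pi:ℂ)*(b2:ℂ)/(mu:ℂ));
           -((1-(p:ℂ))*(ga:ℂ)), lam+(phiu:ℂ), 0, 0;
           -((p:ℂ)*(ga:ℂ)), 0, lam+(phin:ℂ), 0;
           0, -(au:ℂ), -(an:ℂ), lam+(mc:ℂ)] := by
      subst hM
      ext i j
      fin_cases i <;> fin_cases j <;>
        (norm_num [Matrix.one_apply, Fin.ext_iff, Matrix.vecHead, Matrix.vecTail, Function.comp, Matrix.cons_val_succ, show (5:Fin 7)=(4:Fin 6).succ from rfl, show (6:Fin 7)=(5:Fin 6).succ from rfl, show (4:Fin 6)=(3:Fin 5).succ from rfl, show (5:Fin 6)=(4:Fin 5).succ from rfl, show (4:Fin 5)=(3:Fin 4).succ from rfl]; try (push_cast; ring))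
    rw [e7, e4, key7]
    push_cast
    ring
  refine ⟨key, ?_, ?_, ?_⟩ <;>
  · rw [← Complex.ofReal_eq_zero, ← Complex.ofRealHom_eq_coe, RingHom.map_det Complex.ofRealHom]
    have hm : ∀ c : ℝ, ((c • (1 : Matrix (Fin 7) (Fin 7) ℝ) - J).map Complex.ofRealHom) =
        (c : ℂ) • (1 : Matrix (Fin 7) (Fin 7) ℂ) - J.map Complex.ofReal := by
      intro c; ext i j
      by_cases h : i = j <;> simp [Matrix.one_apply, h]
    rw [RingHom.mapMatrix_apply, hm, key]
    push_cast
    ring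
end

section
/- Let all model parameters be positive and set φ_u = η_u+σ_u+μ, φ_n = η_n+σ_n+μ+δ_n, φ_h = σ_h+μ+δ_h. Let J be the 7×7 real Jacobian of the COVID-19 model at the disease-free equilibrium, with rows (ordering S, E, I_u, I_n, I_h, R, V): (−μ, 0, −β1, −ν·β1, 0, θ, −Π·β2/μ), (0, −(γ+μ), β1, ν·β1, 0, 0, Π·β2/μ), (0, (1−p)·γ, −φ_u, 0, 0, 0, 0), (0, p·γ, 0, −φ_n, 0, 0, 0), (0, 0, η_u, η_n, −φ_h, 0, 0), (0, 0, σ_u, σ_n, σ_h, −(θ+μ), 0), (0, 0, α_u, α_n, 0, 0, −μ_c). If ℛ₀ < 1, then every complex eigenvalue of J has strictly negative real part; if ℛ₀ > 1, then J has a real eigenvalue λ* > 0. Here ℛ₀ = (1−p)·γ·β1/(φ_u·(γ+μ)) + p·γ·ν·β1/(φ_n·(γ+μ)) + (1−p)·γ·α_u·β2·(Π/μ)/(μ_c·φ_u·(γ+μ)) + p·γ·α_n·β2·(Π/μ)/(μ_c·φ_n·(γ+μ)). -/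
open Matrix

def sigma7 : (Fin 4 ⊕ Fin 3) ≃ Fin 7 where
  toFun := Sum.elim ![1,2,3,6] ![4,5,0]
  invFun := ![Sum.inr 2, Sum.inl 0, Sum.inl 1, Sum.inl 2, Sum.inr 0, Sum.inr 1, Sum.inl 3]
  left_inv := by decide
  right_inv := by decide

section vecs
variable {α : Type*} (a : α)
@[simp] lemma v7_6 (u : Fin 6 → α) : vecCons a u (6 : Fin 7) = u 5 := rfl
@[simp] lemma v7_5 (u : Fin 6 → α) : vecCons a u (5 : Fin 7) = u 4 := rfl
@[simp] lemma v7_4 (u : Fin 6 → α) : vecCons a u (4 : Fin 7) = u 3 := rfl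
@[simp] lemma v7_3 (u : Fin 6 → α) : vecCons a u (3 : Fin 7) = u 2 := rfl
@[simp] lemma v7_2 (u : Fin 6 → α) : vecCons a u (2 : Fin 7) = u 1 := rfl
@[simp] lemma v6_5 (u : Fin 5 → α) : vecCons a u (5 : Fin 6) = u 4 := rfl
@[simp] lemma v6_4 (u : Fin 5 → α) : vecCons a u (4 : Fin 6) = u 3 := rfl
@[simp] lemma v6_3 (u : Fin 5 → α) : vecCons a u (3 : Fin 6) = u 2 := rfl
@[simp] lemma v6_2 (u : Fin 5 → α) : vecCons a u (2 : Fin 6) = u 1 := rfl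
@[simp] lemma v5_4 (u : Fin 4 → α) : vecCons a u (4 : Fin 5) = u 3 := rfl
@[simp] lemma v5_3 (u : Fin 4 → α) : vecCons a u (3 : Fin 5) = u 2 := rfl
@[simp] lemma v5_2 (u : Fin 4 → α) : vecCons a u (2 : Fin 5) = u 1 := rfl
@[simp] lemma v4_3 (u : Fin 3 → α) : vecCons a u (3 : Fin 4) = u 2 := rfl
@[simp] lemma v4_2 (u : Fin 3 → α) : vecCons a u (2 : Fin 4) = u 1 := rfl
@[simp] lemma v3_2 (u : Fin 2 → α) : vecCons a u (2 : Fin 3) = u 1 := rfl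
end vecs

@[simp] lemma sa421 : Fin.succAbove (1 : Fin 4) (2 : Fin 3) = 3 := rfl
@[simp] lemma sa422 : Fin.succAbove (2 : Fin 4) (2 : Fin 3) = 3 := rfl
@[simp] lemma cs32 : Fin.castSucc (2 : Fin 3) = (2 : Fin 4) := rfl

set_option maxHeartbeats 1000000 in
lemma det_aux {R : Type*} [CommRing R]
    (mu b1 nu th ga p eu en su sn sh au an mc phiu phin phih K lam : R) :
    (lam • (1 : Matrix (Fin 7) (Fin 7) R) -
      !![-mu, 0, -b1, -(nu * b1), 0, th, -K;
         0, -(ga + mu), b1, nu * b1, 0, 0, K;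
         0, (1 - p) * ga, -phiu, 0, 0, 0, 0;
         0, p * ga, 0, -phin, 0, 0, 0;
         0, 0, eu, en, -phih, 0, 0;
         0, 0, su, sn, sh, -(th + mu), 0;
         0, 0, au, an, 0, 0, -mc]).det
    = (lam + mu) * (lam + (th + mu)) * (lam + phih) *
      ((lam + (ga + mu)) * (lam + phiu) * (lam + phin) * (lam + mc)
        - (1 - p) * ga * b1 * (lam + phin) * (lam + mc)
        - p * ga * nu * b1 * (lam + phiu) * (lam + mc)
        - (1 - p) * ga * au * K * (lam + phin)
        - p * ga * an * K * (lam + phiu)) := by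
  set M := lam • (1 : Matrix (Fin 7) (Fin 7) R) -
      !![-mu, 0, -b1, -(nu * b1), 0, th, -K;
         0, -(ga + mu), b1, nu * b1, 0, 0, K;
         0, (1 - p) * ga, -phiu, 0, 0, 0, 0;
         0, p * ga, 0, -phin, 0, 0, 0;
         0, 0, eu, en, -phih, 0, 0;
         0, 0, su, sn, sh, -(th + mu), 0;
         0, 0, au, an, 0, 0, -mc] with hM
  have hsub : M.submatrix sigma7 sigma7 =
      fromBlocks
        !![lam + (ga + mu), -b1, -(nu * b1), -K;
           -((1 - p) * ga), lam + phiu, 0, 0;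
           -(p * ga), 0, lam + phin, 0;
           0, -au, -an, lam + mc]
        0
        !![0, -eu, -en, 0;
           0, -su, -sn, 0;
           0, b1, nu * b1, K]
        !![lam + phih, 0, 0;
           -sh, lam + (th + mu), 0;
           0, -th, lam + mu] := by
    ext i j
    rcases i with i | i <;> rcases j with j | j <;>
      fin_cases i <;> fin_cases j <;>
        simp [hM, sigma7, Matrix.one_apply, fromBlocks, Matrix.vecHead, Matrix.vecTail] <;> ring
  have h1 : M.det = (M.submatrix sigma7 sigma7).det :=
    (Matrix.det_submatrix_equiv_self sigma7 M).symm
  rw [h1, hsub, Matrix.det_fromBlocks_zero₁₂]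
  have h4 : (!![lam + (ga + mu), -b1, -(nu * b1), -K;
           -((1 - p) * ga), lam + phiu, 0, 0;
           -(p * ga), 0, lam + phin, 0;
           0, -au, -an, lam + mc]).det =
      ((lam + (ga + mu)) * (lam + phiu) * (lam + phin) * (lam + mc)
        - (1 - p) * ga * b1 * (lam + phin) * (lam + mc)
        - p * ga * nu * b1 * (lam + phiu) * (lam + mc)
        - (1 - p) * ga * au * K * (lam + phin)
        - p * ga * an * K * (lam + phiu)) := by
    simp [Matrix.det_succ_row_zero, Fin.sum_univ_succ, Fin.succAbove]
    ring
  have h3 : (!![lam + phih, 0, 0;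
           -sh, lam + (th + mu), 0;
           0, -th, lam + mu]).det = (lam + phih) * ((lam + (th + mu)) * (lam + mu)) := by
    simp [Matrix.det_fin_three]
    ring
  rw [h4, h3]
  ring

set_option maxHeartbeats 1000000 in
lemma map_lit7 {α β : Type*} (f : α → β)
    (a b c d e g h i j k l m n o q r s t u v w x y z aa ab ac ad ae af ag ah ai aj ak al am an ao ap aq ar as' at' au av aw ax ay : α) :
    (!![a,b,c,d,e,g,h; i,j,k,l,m,n,o; q,r,s,t,u,v,w; x,y,z,aa,ab,ac,ad;
        ae,af,ag,ah,ai,aj,ak; al,am,an,ao,ap,aq,ar; as',at',au,av,aw,ax,ay]).map f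
    = !![f a,f b,f c,f d,f e,f g,f h; f i,f j,f k,f l,f m,f n,f o;
         f q,f r,f s,f t,f u,f v,f w; f x,f y,f z,f aa,f ab,f ac,f ad;
         f ae,f af,f ag,f ah,f ai,f aj,f ak; f al,f am,f an,f ao,f ap,f aq,f ar;
         f as',f at',f au,f av,f aw,f ax,f ay] := by
  ext i' j'
  fin_cases i' <;> fin_cases j' <;> rfl

set_option maxHeartbeats 4000000 in
set_option maxRecDepth 10000 in
/-- spectral form of the linearized stability of the
disease-free equilibrium: if `ℛ₀ < 1` every complex eigenvalue of the
Jacobian `J` has negative real part; if `ℛ₀ > 1` then `J` has a positive real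
eigenvalue. -/
theorem covid_DFE_spectral_stability
    (Pi b1 b2 nu th mu ga p eu en su sn sh dn dh au an mc : ℝ)
    (hPi : 0 < Pi) (hb1 : 0 < b1) (hb2 : 0 < b2) (hnu : 0 < nu) (hnu1 : nu < 1)
    (hth : 0 < th) (hmu : 0 < mu) (hga : 0 < ga) (hp : 0 < p) (hp1 : p < 1)
    (heu : 0 < eu) (hen : 0 < en) (hsu : 0 < su) (hsn : 0 < sn) (hsh : 0 < sh)
    (hdn : 0 < dn) (hdh : 0 < dh) (hau : 0 < au) (han : 0 < an) (hmc : 0 < mc)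
    (phiu phin phih : ℝ)
    (hphiu : phiu = eu + su + mu) (hphin : phin = en + sn + mu + dn)
    (hphih : phih = sh + mu + dh)
    (J : Matrix (Fin 7) (Fin 7) ℝ)
    (hJ : J = !![-mu, 0, -b1, -nu * b1, 0, th, -Pi * b2 / mu;
                 0, -(ga + mu), b1, nu * b1, 0, 0, Pi * b2 / mu;
                 0, (1 - p) * ga, -phiu, 0, 0, 0, 0;
                 0, p * ga, 0, -phin, 0, 0, 0;
                 0, 0, eu, en, -phih, 0, 0;
                 0, 0, su, sn, sh, -(th + mu), 0;
                 0, 0, au, an, 0, 0, -mc])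
    (R0 : ℝ)
    (hR0 : R0 = (1 - p) * ga * b1 / (phiu * (ga + mu))
      + p * ga * nu * b1 / (phin * (ga + mu))
      + (1 - p) * ga * au * b2 * (Pi / mu) / (mc * phiu * (ga + mu))
      + p * ga * an * b2 * (Pi / mu) / (mc * phin * (ga + mu))) :
    (R0 < 1 → ∀ lam : ℂ,
      (lam • (1 : Matrix (Fin 7) (Fin 7) ℂ) - J.map Complex.ofReal).det = 0 →
        lam.re < 0) ∧
    (R0 > 1 → ∃ lamstar : ℝ, 0 < lamstar ∧
      (lamstar • (1 : Matrix (Fin 7) (Fin 7) ℝ) - J).det = 0) := by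
  have h1p : 0 < 1 - p := by linarith
  have hgm : 0 < ga + mu := by linarith
  have hphiu' : (0:ℝ) < phiu := by rw [hphiu]; positivity
  have hphin' : (0:ℝ) < phin := by rw [hphin]; positivity
  have hphih' : (0:ℝ) < phih := by rw [hphih]; positivity
  set K := Pi * b2 / mu with hKdef
  have hK : 0 < K := by rw [hKdef]; positivity
  have hc1 : 0 < (1 - p) * ga * b1 := by positivity
  have hc2 : 0 < p * ga * nu * b1 := by positivity
  have hc3 : 0 < (1 - p) * ga * au * K := by positivity
  have hc4 : 0 < p * ga * an * K := by positivity
  have hJlit : J = !![-mu, 0, -b1, -(nu * b1), 0, th, -K;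
         0, -(ga + mu), b1, nu * b1, 0, 0, K;
         0, (1 - p) * ga, -phiu, 0, 0, 0, 0;
         0, p * ga, 0, -phin, 0, 0, 0;
         0, 0, eu, en, -phih, 0, 0;
         0, 0, su, sn, sh, -(th + mu), 0;
         0, 0, au, an, 0, 0, -mc] := by
    rw [hJ, show -Pi * b2 / mu = -K from by rw [hKdef]; ring,
        show -nu * b1 = -(nu * b1) from by ring]
  have keyR : ∀ x : ℝ, ((x • (1 : Matrix (Fin 7) (Fin 7) ℝ) - J).det)
      = (x + mu) * (x + (th + mu)) * (x + phih) *
        ((x + (ga + mu)) * (x + phiu) * (x + phin) * (x + mc)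
          - (1 - p) * ga * b1 * (x + phin) * (x + mc)
          - p * ga * nu * b1 * (x + phiu) * (x + mc)
          - (1 - p) * ga * au * K * (x + phin)
          - p * ga * an * K * (x + phiu)) := by
    intro x
    rw [hJlit, det_aux]
  have keyC : ∀ z : ℂ, ((z • (1 : Matrix (Fin 7) (Fin 7) ℂ) - J.map Complex.ofReal).det)
      = (z + ((mu:ℝ):ℂ)) * (z + ((th + mu : ℝ):ℂ)) * (z + ((phih:ℝ):ℂ)) *
        ((z + ((ga + mu : ℝ):ℂ)) * (z + ((phiu:ℝ):ℂ)) * (z + ((phin:ℝ):ℂ)) * (z + ((mc:ℝ):ℂ))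
          - (((1 - p) * ga * b1 : ℝ):ℂ) * ((z + ((phin:ℝ):ℂ)) * (z + ((mc:ℝ):ℂ)))
          - ((p * ga * nu * b1 : ℝ):ℂ) * ((z + ((phiu:ℝ):ℂ)) * (z + ((mc:ℝ):ℂ)))
          - (((1 - p) * ga * au * K : ℝ):ℂ) * (z + ((phin:ℝ):ℂ))
          - ((p * ga * an * K : ℝ):ℂ) * (z + ((phiu:ℝ):ℂ))) := by
    intro z
    rw [hJlit, map_lit7]
    simp only [Complex.ofReal_neg, Complex.ofReal_mul, Complex.ofReal_add,
      Complex.ofReal_sub, Complex.ofReal_one, Complex.ofReal_zero]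
    rw [det_aux]
    push_cast
    ring
  have hR0eq : (1 - p) * ga * b1 * (phin * mc) + p * ga * nu * b1 * (phiu * mc)
      + (1 - p) * ga * au * K * phin + p * ga * an * K * phiu
      = R0 * ((ga + mu) * (phiu * (phin * mc))) := by
    rw [hR0, hKdef]
    field_simp
  constructor
  · -- R0 < 1
    intro hR1 z hz
    by_contra hre
    push_neg at hre
    have habs : ∀ c : ℝ, 0 < c → c ≤ ‖z + (c:ℂ)‖ := by
      intro c hc
      calc c ≤ (z + (c:ℂ)).re := by simp; linarith
        _ ≤ |(z + (c:ℂ)).re| := le_abs_self _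
        _ ≤ ‖z + (c:ℂ)‖ := Complex.abs_re_le_norm _
    have hne : ∀ c : ℝ, 0 < c → z + (c:ℂ) ≠ 0 := by
      intro c hc h0
      have := habs c hc
      rw [h0] at this
      simp at this
      linarith
    rw [keyC z] at hz
    rcases mul_eq_zero.mp hz with h | hP
    · rcases mul_eq_zero.mp h with h' | h3
      · rcases mul_eq_zero.mp h' with h1 | h2
        · exact hne mu hmu h1
        · exact hne (th + mu) (by linarith) h2
      · exact hne phih hphih' h3
    · -- the transcendental-style modulus argument
      have hPz : (z + ((ga + mu : ℝ):ℂ)) * (z + ((phiu:ℝ):ℂ)) * (z + ((phin:ℝ):ℂ)) * (z + ((mc:ℝ):ℂ))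
          = (((1 - p) * ga * b1 : ℝ):ℂ) * ((z + ((phin:ℝ):ℂ)) * (z + ((mc:ℝ):ℂ)))
          + ((p * ga * nu * b1 : ℝ):ℂ) * ((z + ((phiu:ℝ):ℂ)) * (z + ((mc:ℝ):ℂ)))
          + (((1 - p) * ga * au * K : ℝ):ℂ) * (z + ((phin:ℝ):ℂ))
          + ((p * ga * an * K : ℝ):ℂ) * (z + ((phiu:ℝ):ℂ)) := by
        linear_combination hP
      have hE := congrArg norm hPz
      rw [norm_mul, norm_mul, norm_mul] at hE
      have e1 : ‖(((1 - p) * ga * b1 : ℝ):ℂ) * ((z + ((phin:ℝ):ℂ)) * (z + ((mc:ℝ):ℂ)))‖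
          = (1 - p) * ga * b1 * (‖z + ((phin:ℝ):ℂ)‖ * ‖z + ((mc:ℝ):ℂ)‖) := by
        rw [norm_mul, norm_mul, Complex.norm_real, Real.norm_eq_abs, abs_of_pos hc1]
      have e2 : ‖((p * ga * nu * b1 : ℝ):ℂ) * ((z + ((phiu:ℝ):ℂ)) * (z + ((mc:ℝ):ℂ)))‖
          = p * ga * nu * b1 * (‖z + ((phiu:ℝ):ℂ)‖ * ‖z + ((mc:ℝ):ℂ)‖) := by
        rw [norm_mul, norm_mul, Complex.norm_real, Real.norm_eq_abs, abs_of_pos hc2]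
      have e3 : ‖(((1 - p) * ga * au * K : ℝ):ℂ) * (z + ((phin:ℝ):ℂ))‖
          = (1 - p) * ga * au * K * ‖z + ((phin:ℝ):ℂ)‖ := by
        rw [norm_mul, Complex.norm_real, Real.norm_eq_abs, abs_of_pos hc3]
      have e4 : ‖((p * ga * an * K : ℝ):ℂ) * (z + ((phiu:ℝ):ℂ))‖
          = p * ga * an * K * ‖z + ((phiu:ℝ):ℂ)‖ := by
        rw [norm_mul, Complex.norm_real, Real.norm_eq_abs, abs_of_pos hc4]
      set A := ‖z + ((ga + mu : ℝ):ℂ)‖ with hAdef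
      set U := ‖z + ((phiu:ℝ):ℂ)‖ with hUdef
      set N := ‖z + ((phin:ℝ):ℂ)‖ with hNdef
      set C := ‖z + ((mc:ℝ):ℂ)‖ with hCdef
      have hA : ga + mu ≤ A := habs _ hgm
      have hU : phiu ≤ U := habs _ hphiu'
      have hN : phin ≤ N := habs _ hphin'
      have hC : mc ≤ C := habs _ hmc
      have hA0 : (0:ℝ) < A := lt_of_lt_of_le hgm hA
      have hU0 : (0:ℝ) < U := lt_of_lt_of_le hphiu' hU
      have hN0 : (0:ℝ) < N := lt_of_lt_of_le hphin' hN
      have hC0 : (0:ℝ) < C := lt_of_lt_of_le hmc hC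
      have hmain : A * U * N * C ≤ (1 - p) * ga * b1 * (N * C) + p * ga * nu * b1 * (U * C)
          + (1 - p) * ga * au * K * N + p * ga * an * K * U := by
        rw [hE]
        calc ‖(((1 - p) * ga * b1 : ℝ):ℂ) * ((z + ((phin:ℝ):ℂ)) * (z + ((mc:ℝ):ℂ)))
              + ((p * ga * nu * b1 : ℝ):ℂ) * ((z + ((phiu:ℝ):ℂ)) * (z + ((mc:ℝ):ℂ)))
              + (((1 - p) * ga * au * K : ℝ):ℂ) * (z + ((phin:ℝ):ℂ))
              + ((p * ga * an * K : ℝ):ℂ) * (z + ((phiu:ℝ):ℂ))‖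
            ≤ ‖(((1 - p) * ga * b1 : ℝ):ℂ) * ((z + ((phin:ℝ):ℂ)) * (z + ((mc:ℝ):ℂ)))‖
              + ‖((p * ga * nu * b1 : ℝ):ℂ) * ((z + ((phiu:ℝ):ℂ)) * (z + ((mc:ℝ):ℂ)))‖
              + ‖(((1 - p) * ga * au * K : ℝ):ℂ) * (z + ((phin:ℝ):ℂ))‖
              + ‖((p * ga * an * K : ℝ):ℂ) * (z + ((phiu:ℝ):ℂ))‖ := by
              have t1 := norm_add_le
                ((((1 - p) * ga * b1 : ℝ):ℂ) * ((z + ((phin:ℝ):ℂ)) * (z + ((mc:ℝ):ℂ)))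
                  + ((p * ga * nu * b1 : ℝ):ℂ) * ((z + ((phiu:ℝ):ℂ)) * (z + ((mc:ℝ):ℂ)))
                  + (((1 - p) * ga * au * K : ℝ):ℂ) * (z + ((phin:ℝ):ℂ)))
                (((p * ga * an * K : ℝ):ℂ) * (z + ((phiu:ℝ):ℂ)))
              have t2 := norm_add_le
                ((((1 - p) * ga * b1 : ℝ):ℂ) * ((z + ((phin:ℝ):ℂ)) * (z + ((mc:ℝ):ℂ)))
                  + ((p * ga * nu * b1 : ℝ):ℂ) * ((z + ((phiu:ℝ):ℂ)) * (z + ((mc:ℝ):ℂ))))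
                ((((1 - p) * ga * au * K : ℝ):ℂ) * (z + ((phin:ℝ):ℂ)))
              have t3 := norm_add_le
                ((((1 - p) * ga * b1 : ℝ):ℂ) * ((z + ((phin:ℝ):ℂ)) * (z + ((mc:ℝ):ℂ))))
                (((p * ga * nu * b1 : ℝ):ℂ) * ((z + ((phiu:ℝ):ℂ)) * (z + ((mc:ℝ):ℂ))))
              linarith
          _ = (1 - p) * ga * b1 * (N * C) + p * ga * nu * b1 * (U * C)
              + (1 - p) * ga * au * K * N + p * ga * an * K * U := by
              rw [e1, e2, e3, e4]
      -- scaled inequalities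
      have hAU : (ga + mu) * phiu ≤ A * U := mul_le_mul hA hU hphiu'.le hA0.le
      have hAN : (ga + mu) * phin ≤ A * N := mul_le_mul hA hN hphin'.le hA0.le
      have hAUC : (ga + mu) * (phiu * mc) ≤ A * (U * C) :=
        mul_le_mul hA (mul_le_mul hU hC hmc.le hU0.le) (by positivity) hA0.le
      have hANC : (ga + mu) * (phin * mc) ≤ A * (N * C) :=
        mul_le_mul hA (mul_le_mul hN hC hmc.le hN0.le) (by positivity) hA0.le
      have f1 := mul_le_mul_of_nonneg_left hAU
        (show (0:ℝ) ≤ (1 - p) * ga * b1 * ((N * C) * (phin * mc)) by positivity)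
      have f2 := mul_le_mul_of_nonneg_left hAN
        (show (0:ℝ) ≤ p * ga * nu * b1 * ((U * C) * (phiu * mc)) by positivity)
      have f3 := mul_le_mul_of_nonneg_left hAUC
        (show (0:ℝ) ≤ (1 - p) * ga * au * K * (N * phin) by positivity)
      have f4 := mul_le_mul_of_nonneg_left hANC
        (show (0:ℝ) ≤ p * ga * an * K * (U * phiu) by positivity)
      have hscaled := mul_le_mul_of_nonneg_right hmain
        (show (0:ℝ) ≤ (ga + mu) * (phiu * (phin * mc)) by positivity)
      have hR0Q : ((1 - p) * ga * b1 * (phin * mc) + p * ga * nu * b1 * (phiu * mc)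
          + (1 - p) * ga * au * K * phin + p * ga * an * K * phiu) * (A * U * N * C)
          = R0 * ((ga + mu) * (phiu * (phin * mc))) * (A * U * N * C) := by
        rw [hR0eq]
      have hQpos : (0:ℝ) < A * U * N * C := by positivity
      have hlt : R0 * ((ga + mu) * (phiu * (phin * mc))) * (A * U * N * C)
          < ((ga + mu) * (phiu * (phin * mc))) * (A * U * N * C) := by
        have h1 : R0 * ((ga + mu) * (phiu * (phin * mc))) < 1 * ((ga + mu) * (phiu * (phin * mc))) :=
          mul_lt_mul_of_pos_right hR1 (by positivity)
        have h2 := mul_lt_mul_of_pos_right h1 hQpos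
        linarith
      linarith [f1, f2, f3, f4, hscaled, hR0Q, hlt]
  · -- R0 > 1
    intro hR1
    set g : ℝ → ℝ := fun x => (x + (ga + mu)) * (x + phiu) * (x + phin) * (x + mc)
      - (1 - p) * ga * b1 * (x + phin) * (x + mc)
      - p * ga * nu * b1 * (x + phiu) * (x + mc)
      - (1 - p) * ga * au * K * (x + phin)
      - p * ga * an * K * (x + phiu) with hg
    have hcont : Continuous g := by rw [hg]; fun_prop
    set Mb : ℝ := 1 + ((1 - p) * ga * b1 + p * ga * nu * b1 + (1 - p) * ga * au * K + p * ga * an * K) with hMb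
    have hMb1 : (1:ℝ) ≤ Mb := by rw [hMb]; linarith [hc1, hc2, hc3, hc4]
    have hMb0 : (0:ℝ) ≤ Mb := by linarith
    have hg0 : g 0 < 0 := by
      have hval : g 0 = (ga + mu) * (phiu * (phin * mc))
          - ((1 - p) * ga * b1 * (phin * mc) + p * ga * nu * b1 * (phiu * mc)
            + (1 - p) * ga * au * K * phin + p * ga * an * K * phiu) := by
        simp only [hg]
        ring
      rw [hval, hR0eq]
      have h1 : (1:ℝ) * ((ga + mu) * (phiu * (phin * mc))) < R0 * ((ga + mu) * (phiu * (phin * mc))) :=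
        mul_lt_mul_of_pos_right hR1 (by positivity)
      linarith
    have hgM : 0 < g Mb := by
      have hb1' : (Mb + phin) * (Mb + mc) ≤ (Mb + phiu) * ((Mb + phin) * (Mb + mc)) :=
        le_mul_of_one_le_left (by positivity) (by linarith)
      have hb2' : (Mb + phiu) * (Mb + mc) ≤ (Mb + phin) * ((Mb + phiu) * (Mb + mc)) :=
        le_mul_of_one_le_left (by positivity) (by linarith)
      have hone3 : (1:ℝ) ≤ (Mb + phiu) * (Mb + mc) := by
        have : (1:ℝ) * 1 ≤ (Mb + phiu) * (Mb + mc) :=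
          mul_le_mul (by linarith) (by linarith) (by norm_num) (by positivity)
        linarith
      have hone4 : (1:ℝ) ≤ (Mb + phin) * (Mb + mc) := by
        have : (1:ℝ) * 1 ≤ (Mb + phin) * (Mb + mc) :=
          mul_le_mul (by linarith) (by linarith) (by norm_num) (by positivity)
        linarith
      have hb3' : (Mb + phin) ≤ (Mb + phiu) * (Mb + mc) * (Mb + phin) :=
        le_mul_of_one_le_left (by positivity) hone3
      have hb4' : (Mb + phiu) ≤ (Mb + phin) * (Mb + mc) * (Mb + phiu) :=
        le_mul_of_one_le_left (by positivity) hone4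
      have t1 := mul_le_mul_of_nonneg_left hb1' hc1.le
      have t2 := mul_le_mul_of_nonneg_left hb2' hc2.le
      have t3 := mul_le_mul_of_nonneg_left hb3' hc3.le
      have t4 := mul_le_mul_of_nonneg_left hb4' hc4.le
      have hhead : ((1 - p) * ga * b1 + p * ga * nu * b1 + (1 - p) * ga * au * K + p * ga * an * K)
            * ((Mb + phiu) * ((Mb + phin) * (Mb + mc)))
          < (Mb + (ga + mu)) * ((Mb + phiu) * ((Mb + phin) * (Mb + mc))) := by
        apply mul_lt_mul_of_pos_right _ (by positivity)
        rw [hMb]; linarith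
      simp only [hg]
      linarith [t1, t2, t3, t4, hhead]
    have hsub := intermediate_value_Icc hMb0 hcont.continuousOn
    have h0mem : (0:ℝ) ∈ Set.Icc (g 0) (g Mb) := ⟨hg0.le, hgM.le⟩
    obtain ⟨c, hcmem, hgc⟩ := hsub h0mem
    refine ⟨c, ?_, ?_⟩
    · rcases lt_or_eq_of_le hcmem.1 with h | h
      · exact h
      · exfalso; rw [← h] at hgc; linarith
    · rw [keyR c]
      have hzero : (c + (ga + mu)) * (c + phiu) * (c + phin) * (c + mc)
          - (1 - p) * ga * b1 * (c + phin) * (c + mc)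
          - p * ga * nu * b1 * (c + phiu) * (c + mc)
          - (1 - p) * ga * au * K * (c + phin)
          - p * ga * an * K * (c + phiu) = 0 := by
        have := hgc
        simp only [hg] at this
        linarith
      rw [hzero, mul_zero]
end

section
/- Let all model parameters be positive and define A1 = (1−p)·γ/(η_u+σ_u+μ), A2 = p·γ/(η_n+σ_n+μ+δ_n), A3 = (η_u·A1 + η_n·A2)/(σ_h+μ+δ_h), A4 = (σ_u·A1 + σ_n·A2 + σ_h·A3)/(θ+μ), A5 = (α_u·A1 + α_n·A2)/μ_c, A6 = μ·β1·(A1 + ν·A2), A7 = δ_n·A2 + δ_h·A3, and ρ0 = −β2·A5·A7·(θ·A4 − (γ+μ)), ρ1 = (A6 + β2·A5·Π)·(θ·A4 − (γ+μ)) − β2·A5·A7·Π + μ·(γ+μ)·A7, ρ2 = (A6 + β2·A5·Π)·Π − μ·(γ+μ)·Π. Suppose (S*, E*, I_u*, I_n*, I_h*, R*, V*) ∈ ℝ⁷ is an endemic equilibrium of the COVID-19 model, i.e. all seven right-hand sides vanish at this point, with E* > 0 and N* = S*+E*+I_u*+I_n*+I_h*+R* > 0. Then I_u* = A1·E*, I_n*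 = A2·E*, I_h* = A3·E*, R* = A4·E*, V* = A5·E*, S* = (Π + (θ·A4 − (γ+μ))·E*)/μ, and E* is a root of the quadratic equation ρ0·E² + ρ1·E + ρ2 = 0. -/
/-- every endemic equilibrium of the COVID-19 model has its
components proportional to `E*` via the constants `A1, …, A5`, has
`S* = (Π + (θA4 − (γ+μ))E*)/μ`, and `E*` solves the quadratic
`ρ0 E² + ρ1 E + ρ2 = 0`. -/
theorem covid_endemic_equilibrium_structure
    (Pi b1 b2 nu th mu ga p eu en su sn sh dn dh au an mc : ℝ)
    (hPi : 0 < Pi) (hb1 : 0 < b1) (hb2 : 0 < b2) (hnu : 0 < nu) (hnu1 : nu < 1)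
    (hth : 0 < th) (hmu : 0 < mu) (hga : 0 < ga) (hp : 0 < p) (hp1 : p < 1)
    (heu : 0 < eu) (hen : 0 < en) (hsu : 0 < su) (hsn : 0 < sn) (hsh : 0 < sh)
    (hdn : 0 < dn) (hdh : 0 < dh) (hau : 0 < au) (han : 0 < an) (hmc : 0 < mc)
    (A1 A2 A3 A4 A5 A6 A7 rho0 rho1 rho2 : ℝ)
    (hA1 : A1 = (1 - p) * ga / (eu + su + mu))
    (hA2 : A2 = p * ga / (en + sn + mu + dn))
    (hA3 : A3 = (eu * A1 + en * A2) / (sh + mu + dh))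
    (hA4 : A4 = (su * A1 + sn * A2 + sh * A3) / (th + mu))
    (hA5 : A5 = (au * A1 + an * A2) / mc)
    (hA6 : A6 = mu * b1 * (A1 + nu * A2))
    (hA7 : A7 = dn * A2 + dh * A3)
    (hrho0 : rho0 = -(b2 * A5 * A7 * (th * A4 - (ga + mu))))
    (hrho1 : rho1 = (A6 + b2 * A5 * Pi) * (th * A4 - (ga + mu))
      - b2 * A5 * A7 * Pi + mu * (ga + mu) * A7)
    (hrho2 : rho2 = (A6 + b2 * A5 * Pi) * Pi - mu * (ga + mu) * Pi)
    (S E Iu In Ih R V : ℝ)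
    (hE : 0 < E)
    (hNpos : 0 < S + E + Iu + In + Ih + R)
    (h1 : Pi - b1 * S * (Iu + nu * In) / (S + E + Iu + In + Ih + R) - b2 * S * V
      - mu * S + th * R = 0)
    (h2 : b1 * S * (Iu + nu * In) / (S + E + Iu + In + Ih + R) + b2 * S * V
      - (ga + mu) * E = 0)
    (h3 : (1 - p) * ga * E - (eu + su + mu) * Iu = 0)
    (h4 : p * ga * E - (en + sn + mu + dn) * In = 0)
    (h5 : eu * Iu + en * In - (sh + mu + dh) * Ih = 0)
    (h6 : su * Iu + sn * In + sh * Ih - (th + mu) * R = 0)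
    (h7 : au * Iu + an * In - mc * V = 0) :
    Iu = A1 * E ∧ In = A2 * E ∧ Ih = A3 * E ∧ R = A4 * E ∧ V = A5 * E ∧
      S = (Pi + (th * A4 - (ga + mu)) * E) / mu ∧
      rho0 * E ^ 2 + rho1 * E + rho2 = 0 := by

  have hd1 : (eu + su + mu) ≠ 0 := by positivity
  have hd2 : (en + sn + mu + dn) ≠ 0 := by positivity
  have hd3 : (sh + mu + dh) ≠ 0 := by positivity
  have hd4 : (th + mu) ≠ 0 := by positivity
  have hmc' : mc ≠ 0 := ne_of_gt hmc
  have hmu' : mu ≠ 0 := ne_of_gt hmu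
  have hNne : (S + E + Iu + In + Ih + R) ≠ 0 := ne_of_gt hNpos
  have hIu : Iu = A1 * E := by rw [hA1]; field_simp; linarith
  have hIn : In = A2 * E := by rw [hA2]; field_simp; linarith
  have hIh : Ih = A3 * E := by
    rw [hA3]; field_simp; linear_combination -h5 + eu * hIu + en * hIn
  have hR : R = A4 * E := by
    rw [hA4]; field_simp
    linear_combination -h6 + su * hIu + sn * hIn + sh * hIh
  have hV : V = A5 * E := by
    rw [hA5]; field_simp
    linear_combination -h7 + au * hIu + an * hIn
  have hmS : mu * S = Pi + (th * A4 - (ga + mu)) * E := by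
    linear_combination -h1 - h2 + th * hR
  have hS : S = (Pi + (th * A4 - (ga + mu)) * E) / mu := by
    field_simp; linear_combination hmS
  have hmN : mu * (S + E + Iu + In + Ih + R) = Pi - A7 * E := by
    linear_combination -h1 - h2 - h3 - h4 - h5 - h6 - dn * hIn - dh * hIh + E * hA7
  have h2c : b1 * S * (Iu + nu * In) + b2 * S * V * (S + E + Iu + In + Ih + R)
      - (ga + mu) * E * (S + E + Iu + In + Ih + R) = 0 := by
    have := h2
    field_simp at this
    linear_combination this
  have keyX : A6 * (Pi + (th * A4 - (ga + mu)) * E) * E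
      + b2 * A5 * (Pi + (th * A4 - (ga + mu)) * E) * (Pi - A7 * E) * E
      - mu * (ga + mu) * (Pi - A7 * E) * E = 0 := by
    linear_combination mu ^ 2 * h2c - mu ^ 2 * b1 * S * hIu
      - mu ^ 2 * b1 * nu * S * hIn
      - mu ^ 2 * b2 * S * (S + E + Iu + In + Ih + R) * hV
      + E * mu * S * hA6
      + (-(A6 * E) - b2 * A5 * E * (Pi - A7 * E)) * hmS
      + (-(b2 * A5 * E * mu * S) + mu * (ga + mu) * E) * hmN
  have key : (rho0 * E ^ 2 + rho1 * E + rho2) * E = 0 := by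
    linear_combination keyX + E ^ 3 * hrho0 + E ^ 2 * hrho1 + E * hrho2
  refine ⟨hIu, hIn, hIh, hR, hV, hS, ?_⟩
  have := mul_eq_zero.mp key
  rcases this with h | h
  · exact h
  · exact absurd h (ne_of_gt hE)
end

section
/- Let all model parameters be positive with β1 = β1* > 0 (the critical value at which ℛ₀ = 1), set φ_u = η_u+σ_u+μ, φ_n = η_n+σ_n+μ+δ_n, φ_h = σ_h+μ+δ_h, and let v2 > 0, w2 > 0. Define v3 = (β1* + β2·α_u·Π/(μ·μ_c))·v2/φ_u, v4 = (ν·β1* + β2·α_n·Π/(μ·μ_c))·v2/φ_n, v7 = (β2·Π/(μ·μ_c))·v2, and w3 = ((1−p)·γ/φ_u)·w2, w4 = (p·γ/φ_n)·w2, w5 = ((1−p)·γ·η_u/φ_u + p·γ·η_n/φ_n)·w2/φ_h, w6 = [((1−p)·γ/φ_u)·(σ_u + σ_h·η_u/φ_h) + (p·γ/φ_n)·(σ_n + σ_h·η_n/φ_h)]·w2/(θ+μ), w7 = ((1−p)·γ·α_u/φ_u + p·γ·α_n/φ_n)·w2/μ_c, w1 = (1/μ)·[(θ/(θ+μ))·{((1−p)·γ/φ_u)·(σ_u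 + σ_h·η_u/φ_h) + (p·γ/φ_n)·(σ_n + σ_h·η_n/φ_h)} − (γ+μ)]·w2. Define the bifurcation coefficients a = v2·[β2·w1·w7 − (β1*·μ/Π)·{w3·(w2 + 2·w3 + w4 + w5 + w6) + ν·w4·(w2 + w3 + 2·w4 + w5 + w6)}] and b = v2·(w3 + ν·w4). If w1 < 0, then a < 0 and b > 0; hence the model undergoes a forward bifurcation at β1 = β1*. -/
/-- at the critical transmission rate `β1 = β1*` (where
`ℛ₀ = 1`), the Castillo-Chavez–Song bifurcation coefficients satisfy `a < 0`
and `b > 0` (given `w1 < 0`); hence the model undergoes a forward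
bifurcation at `β1 = β1*`. -/
theorem covid_forward_bifurcation_coefficients
    (Pi b2 nu th mu ga p eu en su sn sh dn dh au an mc : ℝ)
    (hPi : 0 < Pi) (hb2 : 0 < b2) (hnu : 0 < nu) (hnu1 : nu < 1)
    (hth : 0 < th) (hmu : 0 < mu) (hga : 0 < ga) (hp : 0 < p) (hp1 : p < 1)
    (heu : 0 < eu) (hen : 0 < en) (hsu : 0 < su) (hsn : 0 < sn) (hsh : 0 < sh)
    (hdn : 0 < dn) (hdh : 0 < dh) (hau : 0 < au) (han : 0 < an) (hmc : 0 < mc)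
    (phiu phin phih : ℝ)
    (hphiu : phiu = eu + su + mu) (hphin : phin = en + sn + mu + dn)
    (hphih : phih = sh + mu + dh)
    (b1star : ℝ)
    (hb1star : b1star = (mc * (ga + mu) * phiu * phin
        - ga * b2 * (Pi / mu) * ((1 - p) * au * phin + p * an * phiu))
      / (mc * ga * ((1 - p) * phin + nu * p * phiu)))
    (hb1starpos : 0 < b1star)
    (v2 w2 : ℝ) (hv2 : 0 < v2) (hw2 : 0 < w2)
    (v3 v4 v7 w1 w3 w4 w5 w6 w7 a b : ℝ)
    (hv3 : v3 = (b1star + b2 * au * Pi / (mu * mc)) * v2 / phiu)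
    (hv4 : v4 = (nu * b1star + b2 * an * Pi / (mu * mc)) * v2 / phin)
    (hv7 : v7 = (b2 * Pi / (mu * mc)) * v2)
    (hw3 : w3 = ((1 - p) * ga / phiu) * w2)
    (hw4 : w4 = (p * ga / phin) * w2)
    (hw5 : w5 = ((1 - p) * ga * eu / phiu + p * ga * en / phin) * w2 / phih)
    (hw6 : w6 = (((1 - p) * ga / phiu) * (su + sh * eu / phih)
      + (p * ga / phin) * (sn + sh * en / phih)) * w2 / (th + mu))
    (hw7 : w7 = ((1 - p) * ga * au / phiu + p * ga * an / phin) * w2 / mc)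
    (hw1 : w1 = (1 / mu) * ((th / (th + mu)) *
      (((1 - p) * ga / phiu) * (su + sh * eu / phih)
        + (p * ga / phin) * (sn + sh * en / phih)) - (ga + mu)) * w2)
    (ha : a = v2 * (b2 * w1 * w7 - (b1star * mu / Pi) *
      (w3 * (w2 + 2 * w3 + w4 + w5 + w6) + nu * w4 * (w2 + w3 + 2 * w4 + w5 + w6))))
    (hb : b = v2 * (w3 + nu * w4))
    (hw1neg : w1 < 0) :
    a < 0 ∧ b > 0 := by
  have hp' : 0 < 1 - p := by linarith
  have hphiu' : 0 < phiu := by rw [hphiu]; linarith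
  have hphin' : 0 < phin := by rw [hphin]; linarith
  have hphih' : 0 < phih := by rw [hphih]; linarith
  have hw3' : 0 < w3 := by
    rw [hw3]; positivity
  have hw4' : 0 < w4 := by
    rw [hw4]; positivity
  have hw5' : 0 < w5 := by
    rw [hw5]; positivity
  have hw6' : 0 < w6 := by
    rw [hw6]; positivity
  have hw7' : 0 < w7 := by
    rw [hw7]; positivity
  constructor
  · have h1 : b2 * w1 * w7 < 0 :=
      mul_neg_of_neg_of_pos (mul_neg_of_pos_of_neg hb2 hw1neg) hw7'
    have h2 : 0 < (b1star * mu / Pi) *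
        (w3 * (w2 + 2 * w3 + w4 + w5 + w6) + nu * w4 * (w2 + w3 + 2 * w4 + w5 + w6)) := by
      apply mul_pos
      · positivity
      · have t1 : 0 < w3 * (w2 + 2 * w3 + w4 + w5 + w6) := by positivity
        have t2 : 0 < nu * w4 * (w2 + w3 + 2 * w4 + w5 + w6) := by positivity
        exact add_pos t1 t2
    rw [ha]
    have : b2 * w1 * w7 - (b1star * mu / Pi) *
        (w3 * (w2 + 2 * w3 + w4 + w5 + w6) + nu * w4 * (w2 + w3 + 2 * w4 + w5 + w6)) < 0 :=
      sub_neg.mpr (h1.trans h2)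
    exact mul_neg_of_pos_of_neg hv2 this
  · rw [hb]
    have : 0 < w3 + nu * w4 := by positivity
    exact mul_pos hv2 this
end

section
/- Let all model parameters be positive with β1 = β1* (the critical value at which ℛ₀ = 1), set φ_u = η_u+σ_u+μ, φ_n = η_n+σ_n+μ+δ_n, φ_h = σ_h+μ+δ_h, and let J be the 7×7 Jacobian of the COVID-19 model at the disease-free equilibrium with rows (ordering S, E, I_u, I_n, I_h, R, V): (−μ, 0, −β1*, −ν·β1*, 0, θ, −Π·β2/μ), (0, −(γ+μ), β1*, ν·β1*, 0, 0, Π·β2/μ), (0, (1−p)·γ, −φ_u, 0, 0, 0, 0), (0, p·γ, 0, −φ_n, 0, 0, 0), (0, 0, η_u, η_n, −φ_h, 0, 0), (0, 0, σ_u, σ_n, σ_h, −(θ+μ), 0), (0, 0, α_u, α_n, 0, 0, −μ_c). Fix v2 > 0, w2 > 0 and define v = (0, v2, v3, v4, 0, 0, v7) with v3 = (β1* + β2·α_u·Π/(μ·μ_c))·v2/φ_u, v4 = (ν·β1* + β2·α_n·Π/(μ·μ_c))·v2/φ_n, v7 = (β2·Π/(μ·μ_c))·v2, and w = (w1, w2,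 w3, w4, w5, w6, w7) with w3 = ((1−p)·γ/φ_u)·w2, w4 = (p·γ/φ_n)·w2, w5 = ((1−p)·γ·η_u/φ_u + p·γ·η_n/φ_n)·w2/φ_h, w6 = [((1−p)·γ/φ_u)·(σ_u + σ_h·η_u/φ_h) + (p·γ/φ_n)·(σ_n + σ_h·η_n/φ_h)]·w2/(θ+μ), w7 = ((1−p)·γ·α_u/φ_u + p·γ·α_n/φ_n)·w2/μ_c, w1 = (1/μ)·[(θ/(θ+μ))·{((1−p)·γ/φ_u)·(σ_u + σ_h·η_u/φ_h) + (p·γ/φ_n)·(σ_n + σ_h·η_n/φ_h)} − (γ+μ)]·w2. Then v is a left null vector and w is a right null vector of J: vᵀ·J = 0 and J·w = 0. -/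

private lemma vec7_0 {α : Type*} (a b c d e f g : α) : ![a,b,c,d,e,f,g] 0 = a := rfl
private lemma vec7_1 {α : Type*} (a b c d e f g : α) : ![a,b,c,d,e,f,g] 1 = b := rfl
private lemma vec7_2 {α : Type*} (a b c d e f g : α) : ![a,b,c,d,e,f,g] 2 = c := rfl
private lemma vec7_3 {α : Type*} (a b c d e f g : α) : ![a,b,c,d,e,f,g] 3 = d := rfl
private lemma vec7_4 {α : Type*} (a b c d e f g : α) : ![a,b,c,d,e,f,g] 4 = e := rfl
private lemma vec7_5 {α : Type*} (a b c d e f g : α) : ![a,b,c,d,e,f,g] 5 = f := rfl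
private lemma vec7_6 {α : Type*} (a b c d e f g : α) : ![a,b,c,d,e,f,g] 6 = g := rfl

private lemma vec7m_0 {α : Type*} (a b c d e f g : α) (h : 0 < 7) : ![a,b,c,d,e,f,g] ⟨0,h⟩ = a := rfl
private lemma vec7m_1 {α : Type*} (a b c d e f g : α) (h : 1 < 7) : ![a,b,c,d,e,f,g] ⟨1,h⟩ = b := rfl
private lemma vec7m_2 {α : Type*} (a b c d e f g : α) (h : 2 < 7) : ![a,b,c,d,e,f,g] ⟨2,h⟩ = c := rfl
private lemma vec7m_3 {α : Type*} (a b c d e f g : α) (h : 3 < 7) : ![a,b,c,d,e,f,g] ⟨3,h⟩ = d := rfl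
private lemma vec7m_4 {α : Type*} (a b c d e f g : α) (h : 4 < 7) : ![a,b,c,d,e,f,g] ⟨4,h⟩ = e := rfl
private lemma vec7m_5 {α : Type*} (a b c d e f g : α) (h : 5 < 7) : ![a,b,c,d,e,f,g] ⟨5,h⟩ = f := rfl
private lemma vec7m_6 {α : Type*} (a b c d e f g : α) (h : 6 < 7) : ![a,b,c,d,e,f,g] ⟨6,h⟩ = g := rfl

set_option maxHeartbeats 1000000 in
/-- at the critical transmission rate `β1 = β1*` (where
`ℛ₀ = 1`), the vectors `v` and `w` of the center-manifold analysis are left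
and right null vectors of the Jacobian `J` at the disease-free equilibrium:
`vᵀ J = 0` and `J w = 0`. -/
theorem covid_null_eigenvectors
    (Pi b2 nu th mu ga p eu en su sn sh dn dh au an mc : ℝ)
    (hPi : 0 < Pi) (hb2 : 0 < b2) (hnu : 0 < nu) (hnu1 : nu < 1)
    (hth : 0 < th) (hmu : 0 < mu) (hga : 0 < ga) (hp : 0 < p) (hp1 : p < 1)
    (heu : 0 < eu) (hen : 0 < en) (hsu : 0 < su) (hsn : 0 < sn) (hsh : 0 < sh)
    (hdn : 0 < dn) (hdh : 0 < dh) (hau : 0 < au) (han : 0 < an) (hmc : 0 < mc)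
    (phiu phin phih : ℝ)
    (hphiu : phiu = eu + su + mu) (hphin : phin = en + sn + mu + dn)
    (hphih : phih = sh + mu + dh)
    (b1star : ℝ)
    (hb1star : b1star = (mc * (ga + mu) * phiu * phin
        - ga * b2 * (Pi / mu) * ((1 - p) * au * phin + p * an * phiu))
      / (mc * ga * ((1 - p) * phin + nu * p * phiu)))
    (hb1starpos : 0 < b1star)
    (J : Matrix (Fin 7) (Fin 7) ℝ)
    (hJ : J = !![-mu, 0, -b1star, -nu * b1star, 0, th, -Pi * b2 / mu;
                 0, -(ga + mu), b1star, nu * b1star, 0, 0, Pi * b2 / mu;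
                 0, (1 - p) * ga, -phiu, 0, 0, 0, 0;
                 0, p * ga, 0, -phin, 0, 0, 0;
                 0, 0, eu, en, -phih, 0, 0;
                 0, 0, su, sn, sh, -(th + mu), 0;
                 0, 0, au, an, 0, 0, -mc])
    (v2 w2 : ℝ) (hv2 : 0 < v2) (hw2 : 0 < w2)
    (v3 v4 v7 w1 w3 w4 w5 w6 w7 : ℝ)
    (hv3 : v3 = (b1star + b2 * au * Pi / (mu * mc)) * v2 / phiu)
    (hv4 : v4 = (nu * b1star + b2 * an * Pi / (mu * mc)) * v2 / phin)
    (hv7 : v7 = (b2 * Pi / (mu * mc)) * v2)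
    (hw3 : w3 = ((1 - p) * ga / phiu) * w2)
    (hw4 : w4 = (p * ga / phin) * w2)
    (hw5 : w5 = ((1 - p) * ga * eu / phiu + p * ga * en / phin) * w2 / phih)
    (hw6 : w6 = (((1 - p) * ga / phiu) * (su + sh * eu / phih)
      + (p * ga / phin) * (sn + sh * en / phih)) * w2 / (th + mu))
    (hw7 : w7 = ((1 - p) * ga * au / phiu + p * ga * an / phin) * w2 / mc)
    (hw1 : w1 = (1 / mu) * ((th / (th + mu)) *
      (((1 - p) * ga / phiu) * (su + sh * eu / phih)
        + (p * ga / phin) * (sn + sh * en / phih)) - (ga + mu)) * w2)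
    (v w : Fin 7 → ℝ)
    (hv : v = ![0, v2, v3, v4, 0, 0, v7])
    (hw : w = ![w1, w2, w3, w4, w5, w6, w7]) :
    Matrix.vecMul v J = 0 ∧ Matrix.mulVec J w = 0 := by
  have hphiu0 : phiu ≠ 0 := by rw [hphiu]; positivity
  have hphin0 : phin ≠ 0 := by rw [hphin]; positivity
  have hphih0 : phih ≠ 0 := by rw [hphih]; positivity
  have hmu0 : mu ≠ 0 := ne_of_gt hmu
  have hmc0 : mc ≠ 0 := ne_of_gt hmc
  have hthmu : th + mu ≠ 0 := by positivity
  have hden : mc * ga * ((1 - p) * phin + nu * p * phiu) ≠ 0 := by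
    have h1p : 0 < 1 - p := by linarith
    have h2 : 0 < phin := by rw [hphin]; positivity
    have h3 : 0 < phiu := by rw [hphiu]; positivity
    positivity
  have hb1 : b1star * (mc * ga * ((1 - p) * phin + nu * p * phiu))
      = mc * (ga + mu) * phiu * phin
        - ga * b2 * (Pi / mu) * ((1 - p) * au * phin + p * an * phiu) := by
    rw [hb1star, div_mul_cancel₀ _ hden]
  field_simp at hb1
  clear hb1star
  subst hJ hv hw hv3 hv4 hv7 hw1 hw3 hw4 hw5 hw6 hw7
  constructor
  · funext i
    fin_cases i <;>
      simp only [Matrix.vecMul, dotProduct, Fin.sum_univ_seven, Matrix.of_apply,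
        vec7_0, vec7_1, vec7_2, vec7_3, vec7_4, vec7_5, vec7_6,
        vec7m_0, vec7m_1, vec7m_2, vec7m_3, vec7m_4, vec7m_5, vec7m_6,
        _root_.Pi.zero_apply, zero_mul, mul_zero, add_zero, zero_add] <;>
      skip
    all_goals field_simp
    any_goals ring
    linear_combination v2 * hb1
  · funext i
    fin_cases i <;>
      simp only [Matrix.mulVec, dotProduct, Fin.sum_univ_seven, Matrix.of_apply,
        vec7_0, vec7_1, vec7_2, vec7_3, vec7_4, vec7_5, vec7_6,
        vec7m_0, vec7m_1, vec7m_2, vec7m_3, vec7m_4, vec7m_5, vec7m_6,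
        _root_.Pi.zero_apply, zero_mul, mul_zero, add_zero, zero_add] <;>
      skip
    all_goals field_simp
    any_goals ring
    · linear_combination (-(w2 * phih * (th + mu))) * hb1
    · linear_combination w2 * hb1
end
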